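/- arXiv:0909.1723 — 7 statements merged into one kernel-verified Lean document; each statement's English description precedes it below -/
import Mathlib

section
/- If two permutations π and σ of the vertex set of a finite undirected graph Y induce the same acyclic orientation of Y (i.e., for every edge {i,j}, i precedes j in π if and only if i precedes j in σ), then the sequential dynamical system maps [F_Y, π] and [F_Y, σ] are equal as functions K^n → K^n. -/
/-- The SDS map `[F_Y, π] = F_{π_n} ∘ ⋯ ∘ F_{π_1}`: apply the local functions
in the order given by the permutation `π`. -/
def sdsMap {n : ℕ} {K : Type*} (F : Fin n → (Fin n → K) → (Fin n → K))
    (π : Equiv.Perm (Fin n)) (x : Fin n → K) : Fin n → K :=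
  (List.ofFn (fun k => π k)).foldl (fun y i => F i y) x

/-- The value of coordinate `i` at the moment it is updated, defined
recursively along the order `π`. -/
def ordVal {n : ℕ} {K : Type*} (F : Fin n → (Fin n → K) → (Fin n → K))
    (π : Equiv.Perm (Fin n)) (x : Fin n → K) (i : Fin n) : K :=
  F i (fun j => if h : π.symm j < π.symm i then ordVal F π x j else x j) i
termination_by π.symm i
decreasing_by exact h

lemma foldl_prefix {n : ℕ} {K : Type*} (F : Fin n → (Fin n → K) → (Fin n → K))
    (hloc : ∀ i x j, j ≠ i → F i x j = x j)
    (π : Equiv.Perm (Fin n)) (x : Fin n → K) :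
    ∀ m (h : m ≤ n) (j : Fin n),
      ((List.ofFn fun k : Fin m => π (Fin.castLE h k)).foldl (fun y i => F i y) x) j
        = if (π.symm j : ℕ) < m then ordVal F π x j else x j := by
  intro m
  induction m with
  | zero => intro h j; simp
  | succ m ih =>
    intro h j
    have hm : m < n := h
    have h' : m ≤ n := Nat.le_of_lt hm
    have hlist : (List.ofFn fun k : Fin (m+1) => π (Fin.castLE h k))
        = (List.ofFn fun k : Fin m => π (Fin.castLE h' k)).concat (π ⟨m, hm⟩) := by
      rw [List.ofFn_succ']; rfl
    rw [hlist, List.concat_eq_append, List.foldl_append, List.foldl_cons, List.foldl_nil]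
    have hsymm : π.symm (π ⟨m, hm⟩) = ⟨m, hm⟩ := by simp
    by_cases hj : j = π ⟨m, hm⟩
    · rw [hj, if_pos (by rw [hsymm]; exact Nat.lt_succ_self m)]
      have hfun : (List.ofFn fun k : Fin m => π (Fin.castLE h' k)).foldl (fun y i => F i y) x
          = fun k => if hk : π.symm k < π.symm (π ⟨m, hm⟩) then ordVal F π x k else x k := by
        funext k
        rw [ih h' k, dite_eq_ite]
        have hiff : ((π.symm k : ℕ) < m) ↔ (π.symm k < π.symm (π ⟨m, hm⟩)) := by
          rw [hsymm]; exact Iff.rfl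
        exact if_congr hiff rfl rfl
      rw [hfun]
      conv_rhs => rw [ordVal]
    · rw [hloc _ _ j hj, ih h' j]
      have hne : (π.symm j : ℕ) ≠ m := by
        intro hc
        apply hj
        have h1 : π.symm j = ⟨m, hm⟩ := Fin.ext hc
        have h2 := congrArg π h1
        simpa using h2
      by_cases hc : (π.symm j : ℕ) < m
      · rw [if_pos hc, if_pos (Nat.lt_succ_of_lt hc)]
      · rw [if_neg hc, if_neg (by omega)]

lemma sdsMap_eq_ordVal {n : ℕ} {K : Type*} (F : Fin n → (Fin n → K) → (Fin n → K))
    (hloc : ∀ i x j, j ≠ i → F i x j = x j)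
    (π : Equiv.Perm (Fin n)) (x : Fin n → K) (j : Fin n) :
    sdsMap F π x j = ordVal F π x j := by
  have h := foldl_prefix F hloc π x n le_rfl j
  have hlist : (List.ofFn fun k : Fin n => π (Fin.castLE le_rfl k))
      = List.ofFn fun k => π k := rfl
  rw [hlist] at h
  rw [sdsMap, h, if_pos (π.symm j).isLt]

/-- If two permutations induce the same acyclic orientation (i.e. agree on the
relative order of the endpoints of every edge), the SDS maps coincide. -/
theorem stmt0 {n : ℕ} {K : Type*} (Y : SimpleGraph (Fin n))
    (F : Fin n → (Fin n → K) → (Fin n → K))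
    (hloc : ∀ i x j, j ≠ i → F i x j = x j)
    (hdep : ∀ i (x y : Fin n → K),
      (∀ j, (j = i ∨ Y.Adj i j) → x j = y j) → F i x i = F i y i)
    (π σ : Equiv.Perm (Fin n))
    (hsame : ∀ i j, Y.Adj i j → (π.symm i < π.symm j ↔ σ.symm i < σ.symm j)) :
    sdsMap F π = sdsMap F σ := by
  funext x j
  rw [sdsMap_eq_ordVal F hloc π x j, sdsMap_eq_ordVal F hloc σ x j]
  -- ordVal π = ordVal σ, by strong induction on π.symm i
  suffices hmain : ∀ m (i : Fin n), (π.symm i : ℕ) < m →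
      ordVal F π x i = ordVal F σ x i by
    exact hmain n j (π.symm j).isLt
  intro m
  induction m with
  | zero => intro i hi; omega
  | succ m ih =>
    intro i hi
    rw [ordVal, ordVal]
    apply hdep
    intro k hk
    rcases hk with hk | hadj
    · subst hk
      rw [dif_neg (lt_irrefl _), dif_neg (lt_irrefl _)]
    · have hiff : π.symm k < π.symm i ↔ σ.symm k < σ.symm i :=
        hsame k i hadj.symm
      by_cases hc : π.symm k < π.symm i
      · rw [dif_pos hc, dif_pos (hiff.mp hc)]
        exact ih k (by have h1 := Fin.lt_def.mp hc; omega)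
      · have hc' : ¬ σ.symm k < σ.symm i := fun hh => hc (hiff.mpr hh)
        rw [dif_neg hc, dif_neg hc']
end

section
/- Let Y be a finite undirected graph, γ an automorphism of Y, and suppose the sequence of Y-local functions F_Y is Aut(Y)-invariant, meaning γ ∘ F_v = F_{γ(v)} ∘ γ for all vertices v, where γ acts on K^n by permuting coordinates. Then for any permutation π of the vertices, γ ∘ [F_Y, π] ∘ γ^{-1} = [F_Y, γπ], where γπ is the permutation obtained by applying γ to each entry of π. In particular [F_Y, π] and [F_Y, γπ] are conjugate, hence dynamically equivalent. -/
/-- The action of a permutation `γ` on states: `(γ·x)_i = x_{γ⁻¹(i)}`. -/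
def permAct {n : ℕ} {K : Type*} (γ : Equiv.Perm (Fin n)) (x : Fin n → K) :
    Fin n → K :=
  fun i => x (γ.symm i)

lemma foldl_perm {n : ℕ} {K : Type*} (F : Fin n → (Fin n → K) → (Fin n → K))
    (γ : Equiv.Perm (Fin n))
    (hinv : ∀ v x, permAct γ (F v x) = F (γ v) (permAct γ x))
    (l : List (Fin n)) (y : Fin n → K) :
    permAct γ (l.foldl (fun y i => F i y) y)
      = (l.map γ).foldl (fun y i => F i y) (permAct γ y) := by
  induction l generalizing y with
  | nil => rfl
  | cons a t ih => simp [List.foldl, ih, hinv]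

/-- If `γ` is a graph automorphism and the `Y`-local functions are
`Aut(Y)`-invariant, then `γ ∘ [F_Y, π] ∘ γ⁻¹ = [F_Y, γπ]`; in particular the two
SDS maps are conjugate, hence dynamically equivalent. -/
theorem stmt3 {n : ℕ} {K : Type*} (Y : SimpleGraph (Fin n))
    (F : Fin n → (Fin n → K) → (Fin n → K))
    (hloc : ∀ i x j, j ≠ i → F i x j = x j)
    (γ : Equiv.Perm (Fin n))
    (hγ : ∀ i j, Y.Adj (γ i) (γ j) ↔ Y.Adj i j)
    (hinv : ∀ v x, permAct γ (F v x) = F (γ v) (permAct γ x))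
    (π : Equiv.Perm (Fin n)) :
    ∀ x : Fin n → K,
      permAct γ (sdsMap F π (permAct γ⁻¹ x)) = sdsMap F (γ * π) x := by
  intro x
  have hx : permAct γ (permAct γ⁻¹ x) = x := by
    funext i; simp [permAct, Equiv.Perm.inv_def]
  rw [sdsMap, foldl_perm F γ hinv, hx, sdsMap]
  congr 1
  rw [List.map_ofFn]; rfl
end

section
/- If Y is a tree on n ≥ 1 vertices, then any two acyclic orientations of Y are related by a sequence of source-to-sink operations; equivalently κ(Y) = 1. -/
/-- An orientation of a simple graph `Y`. -/
structure Orient {n : ℕ} (Y : SimpleGraph (Fin n)) where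
  dir : Fin n → Fin n → Prop
  dir_adj : ∀ i j, dir i j → Y.Adj i j
  dir_iff : ∀ i j, Y.Adj i j → (dir i j ↔ ¬ dir j i)

/-- An orientation is acyclic if it induces no directed cycle. -/
def IsAcyc {n : ℕ} {Y : SimpleGraph (Fin n)} (o : Orient Y) : Prop :=
  ∀ v, ¬ Relation.TransGen o.dir v v

/-- A source of an orientation: a vertex with no incoming edges. -/
def IsSource {n : ℕ} {Y : SimpleGraph (Fin n)} (o : Orient Y) (v : Fin n) : Prop :=
  ∀ j, ¬ o.dir j v

/-- The source-to-sink (click) relation: `o'` is obtained from `o` by choosing a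
source `v` of `o` and reversing all edges incident to `v`. -/
def ClickRel {n : ℕ} {Y : SimpleGraph (Fin n)} (o o' : Orient Y) : Prop :=
  ∃ v, IsSource o v ∧
    ∀ i j, o'.dir i j ↔ (if i = v ∨ j = v then o.dir j i else o.dir i j)

section Aux

open Relation Finset

variable {n : ℕ} {Y : SimpleGraph (Fin n)}

lemma auxExt (o o' : Orient Y) (h : ∀ i j, o.dir i j ↔ o'.dir i j) : o = o' := by
  cases o with
  | mk d da di =>
    cases o' with
    | mk d' da' di' =>
      have : d = d' := by
        funext i j
        exact propext (h i j)
      subst this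
      rfl

lemma auxNoLoop (o : Orient Y) (i : Fin n) : ¬ o.dir i i := fun h =>
  Y.loopless.irrefl i (o.dir_adj i i h)

/-- Flip all edges between `S` and its complement. -/
def auxFlip (o : Orient Y) (S : Finset (Fin n)) : Orient Y where
  dir i j := if ((i ∈ S) ↔ (j ∈ S)) then o.dir i j else o.dir j i
  dir_adj := by
    intro i j h
    split_ifs at h with hc
    · exact o.dir_adj i j h
    · exact (o.dir_adj j i h).symm
  dir_iff := by
    intro i j hadj
    show (if ((i ∈ S) ↔ (j ∈ S)) then o.dir i j else o.dir j i) ↔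
      ¬ (if ((j ∈ S) ↔ (i ∈ S)) then o.dir j i else o.dir i j)
    by_cases hc : ((i ∈ S) ↔ (j ∈ S))
    · rw [if_pos hc, if_pos (Iff.comm.mp hc)]
      exact o.dir_iff i j hadj
    · rw [if_neg hc, if_neg (fun h => hc (Iff.comm.mp h))]
      exact o.dir_iff j i hadj.symm

lemma auxFlip_dir (o : Orient Y) (S : Finset (Fin n)) (i j : Fin n) :
    (auxFlip o S).dir i j = if ((i ∈ S) ↔ (j ∈ S)) then o.dir i j else o.dir j i := rfl

lemma auxFlip_univ (o : Orient Y) : auxFlip o Finset.univ = o := by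
  apply auxExt
  intro i j
  simp [auxFlip_dir]

lemma auxWF (o : Orient Y) (ho : IsAcyc o) : WellFounded (TransGen o.dir) := by
  haveI : IsTrans (Fin n) (TransGen o.dir) := ⟨fun _ _ _ h1 h2 => h1.trans h2⟩
  haveI : IsIrrefl (Fin n) (TransGen o.dir) := ⟨ho⟩
  exact Finite.wellFounded_of_trans_of_irrefl _

lemma auxClickFlipSingle (o : Orient Y) {v : Fin n} (hv : IsSource o v) :
    ClickRel o (auxFlip o {v}) := by
  refine ⟨v, hv, fun i j => ?_⟩
  by_cases hi : i = v <;> by_cases hj : j = v <;>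
    simp [auxFlip_dir, hi, hj]

lemma auxClickEq {o o' : Orient Y} (h : ClickRel o o') :
    ∃ v, IsSource o v ∧ o' = auxFlip o {v} := by
  obtain ⟨v, hv, hiff⟩ := h
  refine ⟨v, hv, auxExt _ _ fun i j => ?_⟩
  rw [hiff i j]
  by_cases hi : i = v <;> by_cases hj : j = v <;>
    simp [auxFlip_dir, hi, hj]

lemma auxFlipSink (o : Orient Y) {v : Fin n} (hv : IsSource o v) (j : Fin n) :
    ¬ (auxFlip o {v}).dir v j := by
  by_cases hj : j = v
  · subst hj
    simpa [auxFlip_dir] using auxNoLoop o j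
  · simpa [auxFlip_dir, hj] using hv j

lemma auxFlipOther (o : Orient Y) {v i j : Fin n} (hi : i ≠ v) (hj : j ≠ v) :
    (auxFlip o {v}).dir i j ↔ o.dir i j := by
  simp [auxFlip_dir, hi, hj]

lemma auxAcycFlip (o : Orient Y) (ho : IsAcyc o) {v : Fin n} (hv : IsSource o v) :
    IsAcyc (auxFlip o {v}) := by
  set o₂ := auxFlip o {v} with ho₂
  have noFromV : ∀ a b, TransGen o₂.dir a b → a ≠ v := by
    intro a b h
    induction h with
    | single h' => rintro rfl; exact auxFlipSink o hv _ h'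
    | tail h1 h2 ih => exact ih
  have transfer : ∀ a b, TransGen o₂.dir a b → b ≠ v → TransGen o.dir a b := by
    intro a b h
    induction h with
    | @single b' h' =>
      intro hb
      have ha : a ≠ v := noFromV _ _ (TransGen.single h')
      exact TransGen.single ((auxFlipOther o ha hb).mp h')
    | @tail b' c' h1 h2 ih =>
      intro hb
      have hc : b' ≠ v := by
        rintro rfl
        exact auxFlipSink o hv _ h2
      exact (ih hc).tail ((auxFlipOther o hc hb).mp h2)
  intro x hx
  by_cases hxv : x = v
  · exact noFromV _ _ hx hxv
  · exact ho x (transfer _ _ hx hxv)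

lemma auxRev (o : Orient Y) (ho : IsAcyc o) :
    ∀ (N : ℕ) (S : Finset (Fin n)), (Finset.univ \ S).card ≤ N →
      (∀ a b, o.dir a b → b ∈ S → a ∈ S) →
      ReflTransGen ClickRel (auxFlip o S) o := by
  intro N
  induction N with
  | zero =>
    intro S hcard _
    have hemp : Finset.univ \ S = ∅ := Finset.card_eq_zero.mp (Nat.le_zero.mp hcard)
    have hS : S = Finset.univ :=
      Finset.eq_univ_of_forall fun x => by
        by_contra hx
        have hmem : x ∈ Finset.univ \ S := Finset.mem_sdiff.mpr ⟨Finset.mem_univ x, hx⟩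
        rw [hemp] at hmem
        exact absurd hmem (Finset.notMem_empty x)
    rw [hS, auxFlip_univ]
  | succ N ih =>
    intro S hcard hclosed
    by_cases hS : S = Finset.univ
    · rw [hS, auxFlip_univ]
    · -- pick a minimal element of the complement
      have hne : ∃ x, x ∉ S := by
        by_contra h
        push_neg at h
        exact hS (Finset.eq_univ_of_forall h)
      obtain ⟨u, hu0, hmin⟩ := (auxWF o ho).has_min {x | x ∉ S} hne
      have hu : u ∉ S := hu0
      have hinU : ∀ j, o.dir j u → j ∈ S := by
        intro j hj
        by_contra hjS
        exact hmin j hjS (TransGen.single hj)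
      have houtU : ∀ b, b ∈ S → ¬ o.dir u b := by
        intro b hb hdir
        exact hu (hclosed _ _ hdir hb)
      -- u is a source of auxFlip o S
      have hsource : IsSource (auxFlip o S) u := by
        intro j hdir
        by_cases hjS : j ∈ S
        · have : o.dir u j := by simpa [auxFlip_dir, hjS, hu] using hdir
          exact houtU j hjS this
        · have : o.dir j u := by simpa [auxFlip_dir, hjS, hu] using hdir
          exact hjS (hinU j this)
      have hstep : ClickRel (auxFlip o S) (auxFlip o (insert u S)) := by
        refine ⟨u, hsource, fun i j => ?_⟩
        by_cases hi : i = u <;> by_cases hj : j = u <;>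
          by_cases hiS : i ∈ S <;> by_cases hjS : j ∈ S <;>
          simp_all [auxFlip_dir, Finset.mem_insert]
      have hclosed' : ∀ a b, o.dir a b → b ∈ insert u S → a ∈ insert u S := by
        intro a b hd hb
        rcases Finset.mem_insert.mp hb with rfl | hb
        · exact Finset.mem_insert_of_mem (hinU a hd)
        · exact Finset.mem_insert_of_mem (hclosed a b hd hb)
      have hcard' : (Finset.univ \ insert u S).card ≤ N := by
        have h1 : Finset.univ \ insert u S = (Finset.univ \ S).erase u := by
          ext x
          simp [Finset.mem_sdiff, Finset.mem_erase, Finset.mem_insert]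
        have h2 : u ∈ Finset.univ \ S := Finset.mem_sdiff.mpr ⟨Finset.mem_univ u, hu⟩
        rw [h1]
        have := Finset.card_erase_of_mem h2
        omega
      exact ReflTransGen.head hstep (ih (insert u S) hcard' hclosed')

lemma auxSymm (o p : Orient Y) (ho : IsAcyc o) (h : ReflTransGen ClickRel o p) :
    IsAcyc p ∧ ReflTransGen ClickRel p o := by
  induction h with
  | refl => exact ⟨ho, ReflTransGen.refl⟩
  | tail h1 h2 ih =>
    obtain ⟨hq, hqo⟩ := ih
    obtain ⟨v, hv, rfl⟩ := auxClickEq h2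
    refine ⟨auxAcycFlip _ hq hv, ReflTransGen.trans ?_ hqo⟩
    refine auxRev _ hq n {v} ?_ ?_
    · have : ((Finset.univ : Finset (Fin n)) \ {v}).card ≤ Finset.univ.card :=
        Finset.card_le_card (Finset.sdiff_subset)
      simpa using this
    · intro a b hd hb
      simp only [Finset.mem_singleton] at hb
      subst hb
      exact absurd hd (hv a)

/-- Directed reachability yields a simple path in the graph. -/
lemma auxWalk (o : Orient Y) (ho : IsAcyc o) {a b : Fin n}
    (h : ReflTransGen o.dir a b) :
    ∃ p : Y.Walk a b, p.IsPath ∧ ∀ x ∈ p.support, ReflTransGen o.dir a x ∧ ReflTransGen o.dir x b := by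
  induction h using Relation.ReflTransGen.head_induction_on with
  | refl =>
    refine ⟨SimpleGraph.Walk.nil, SimpleGraph.Walk.IsPath.nil, ?_⟩
    intro x hx
    simp only [SimpleGraph.Walk.support_nil, List.mem_singleton] at hx
    subst hx
    exact ⟨ReflTransGen.refl, ReflTransGen.refl⟩
  | @head a' c' hac hcb ih =>
    obtain ⟨p, hp, hsupp⟩ := ih
    have hna : a' ∉ p.support := by
      intro hmem
      have := (hsupp a' hmem).1
      exact ho a' (TransGen.head' hac this)
    refine ⟨SimpleGraph.Walk.cons (o.dir_adj _ _ hac) p, hp.cons hna, ?_⟩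
    intro x hx
    rw [SimpleGraph.Walk.support_cons, List.mem_cons] at hx
    rcases hx with rfl | hx
    · exact ⟨ReflTransGen.refl, ReflTransGen.head hac (hsupp c' p.start_mem_support).2⟩
    · exact ⟨ReflTransGen.head hac (hsupp x hx).1, (hsupp x hx).2⟩

/-- In a tree, adjacent vertices have different distances to any root. -/
lemma auxAdjDistNe (hY : Y.IsTree) (r : Fin n) {u w : Fin n} (hadj : Y.Adj u w) :
    Y.dist u r ≠ Y.dist w r := by
  intro hEq
  obtain ⟨q, hq, hql⟩ := hY.isConnected.exists_path_of_dist w r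
  by_cases hu : u ∈ q.support
  · have h1 : Y.dist u r ≤ (q.dropUntil u hu).length := SimpleGraph.dist_le _
    have h2 : (q.takeUntil u hu).length + (q.dropUntil u hu).length = q.length := by
      have := congrArg SimpleGraph.Walk.length (q.take_spec hu)
      rwa [SimpleGraph.Walk.length_append] at this
    have h3 : (q.takeUntil u hu).length ≠ 0 := by
      intro h0
      exact hadj.ne (SimpleGraph.Walk.eq_of_length_eq_zero h0).symm
    omega
  · have hpath : (SimpleGraph.Walk.cons hadj q).IsPath := hq.cons hu
    obtain ⟨p, hp, hpl⟩ := hY.isConnected.exists_path_of_dist u r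
    have := (hY.existsUnique_path u r).unique hpath hp
    have hlen := congrArg SimpleGraph.Walk.length this
    rw [SimpleGraph.Walk.length_cons, hql, hpl] at hlen
    omega

/-- Every non-root vertex has a neighbor strictly closer to the root. -/
lemma auxParent (hY : Y.IsTree) (r : Fin n) {s : Fin n} (hs : s ≠ r) :
    ∃ u, Y.Adj s u ∧ Y.dist u r + 1 = Y.dist s r := by
  obtain ⟨p, hp, hpl⟩ := hY.isConnected.exists_path_of_dist s r
  obtain ⟨x, hx, q, rfl⟩ := SimpleGraph.Walk.exists_eq_cons_of_ne hs p
  refine ⟨x, hx, ?_⟩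
  have h1 : Y.dist x r ≤ q.length := SimpleGraph.dist_le _
  have h2 : Y.dist s r ≤ Y.dist s x + Y.dist x r := hY.isConnected.dist_triangle
  have h3 : Y.dist s x ≤ 1 := by
    have := SimpleGraph.dist_le (SimpleGraph.Walk.cons hx SimpleGraph.Walk.nil)
    simpa using this
  rw [SimpleGraph.Walk.length_cons] at hpl
  omega

/-- In a tree there is no directed path from the root crossing a "toward-root" edge. -/
lemma auxNoPathDown (hY : Y.IsTree) (r : Fin n) (o : Orient Y) (ho : IsAcyc o)
    {w u : Fin n} (hwu : o.dir w u) (hd : Y.dist u r + 1 = Y.dist w r) :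
    ¬ ReflTransGen o.dir r w := by
  intro hrw
  obtain ⟨p, hp, hsupp⟩ := auxWalk o ho hrw
  have hadj : Y.Adj u w := (o.dir_adj _ _ hwu).symm
  have hune : u ∉ p.support := by
    intro hmem
    have h1 : ReflTransGen o.dir u w := (hsupp u hmem).2
    exact ho w (TransGen.head' hwu h1)
  have hune' : u ∉ p.reverse.support := by
    rwa [SimpleGraph.Walk.support_reverse, List.mem_reverse]
  have hqpath : (SimpleGraph.Walk.cons hadj p.reverse).IsPath := hp.reverse.cons hune'
  obtain ⟨g, hg, hgl⟩ := hY.isConnected.exists_path_of_dist u r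
  have hEqPaths := (hY.existsUnique_path u r).unique hqpath hg
  have hwmem : w ∈ g.support := by
    rw [← hEqPaths]
    simp [SimpleGraph.Walk.support_cons, SimpleGraph.Walk.support_reverse,
      p.end_mem_support]
  have h1 : Y.dist w r ≤ (g.dropUntil w hwmem).length := SimpleGraph.dist_le _
  have h2 : (g.dropUntil w hwmem).length ≤ g.length :=
    SimpleGraph.Walk.length_dropUntil_le g hwmem
  omega

open Classical in
/-- Weight of a "wrong" (toward-root) directed edge. -/
noncomputable def auxF (o : Orient Y) (r i j : Fin n) : ℕ :=
  if o.dir i j ∧ Y.dist i r = Y.dist j r + 1 then (n + 1) ^ (n - Y.dist i r) else 0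

noncomputable def auxM (o : Orient Y) (r : Fin n) : ℕ :=
  ∑ i, ∑ j, auxF o r i j

/-- The canonical orientation: all edges directed away from the root. -/
def auxRoot (r : Fin n)
    (hd : ∀ u w : Fin n, Y.Adj u w → Y.dist u r ≠ Y.dist w r) : Orient Y where
  dir i j := Y.Adj i j ∧ Y.dist i r < Y.dist j r
  dir_adj := fun _ _ h => h.1
  dir_iff := by
    intro i j hadj
    constructor
    · rintro ⟨_, hlt⟩ ⟨_, hlt'⟩
      omega
    · intro h
      refine ⟨hadj, ?_⟩
      have h1 : ¬ Y.dist j r < Y.dist i r := fun hlt => h ⟨hadj.symm, hlt⟩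
      have h2 := hd i j hadj
      omega

lemma auxDecrease (hY : Y.IsTree) (r : Fin n) (o : Orient Y)
    {s : Fin n} (hs : IsSource o s) (hsr : s ≠ r) :
    auxM (auxFlip o {s}) r < auxM o r := by
  classical
  set o₂ := auxFlip o {s} with ho₂
  set d := Y.dist s r with hdd
  have hd1 : 1 ≤ d := by
    have : d ≠ 0 := fun h0 => hsr (hY.isConnected.dist_eq_zero_iff.mp h0)
    omega
  have hdn : d < n := by
    obtain ⟨p, hp, hpl⟩ := hY.isConnected.exists_path_of_dist s r
    have := hp.length_lt
    simp only [Fintype.card_fin] at this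
    omega
  obtain ⟨u₀, hu₀adj, hu₀d⟩ := auxParent hY r hsr
  have hsu₀ : o.dir s u₀ := by
    rcases (o.dir_iff s u₀ hu₀adj).mpr (hs u₀) with h
    exact h
  -- row sum at s for o is at least (n+1)^(n-d)
  have hrow : (n + 1) ^ (n - d) ≤ ∑ j, auxF o r s j := by
    have hterm : auxF o r s u₀ = (n + 1) ^ (n - d) := by
      rw [auxF, if_pos ⟨hsu₀, by omega⟩]
    calc (n + 1) ^ (n - d) = auxF o r s u₀ := hterm.symm
      _ ≤ ∑ j, auxF o r s j :=
        Finset.single_le_sum (fun i _ => Nat.zero_le _) (Finset.mem_univ u₀)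
  -- column at s for o is zero
  have hcol0 : ∀ i, auxF o r i s = 0 := by
    intro i
    rw [auxF, if_neg]
    rintro ⟨hdir, -⟩
    exact hs i hdir
  -- row at s for o₂ is zero
  have hrow2 : ∀ j, auxF o₂ r s j = 0 := by
    intro j
    rw [auxF, if_neg]
    rintro ⟨hdir, -⟩
    exact auxFlipSink o hs j hdir
  -- column at s for o₂ is bounded
  have hcol2 : ∀ i, auxF o₂ r i s ≤ (n + 1) ^ (n - (d + 1)) := by
    intro i
    rw [auxF]
    split_ifs with h
    · obtain ⟨-, hdi⟩ := h
      rw [hdi, ← hdd]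
    · exact Nat.zero_le _
  -- off terms agree
  have hoff : ∀ i j, i ≠ s → j ≠ s → auxF o₂ r i j = auxF o r i j := by
    intro i j hi hj
    rw [auxF, auxF]
    exact if_congr (and_congr_left' (auxFlipOther o hi hj)) rfl rfl
  -- decompose the sums
  have hdecomp : ∀ (p : Orient Y), auxM p r =
      (∑ j, auxF p r s j) + ∑ i ∈ Finset.univ.erase s, (auxF p r i s +
        ∑ j ∈ Finset.univ.erase s, auxF p r i j) := by
    intro p
    rw [auxM, ← Finset.add_sum_erase _ _ (Finset.mem_univ s)]
    congr 1
    apply Finset.sum_congr rfl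
    intro i _
    rw [← Finset.add_sum_erase _ _ (Finset.mem_univ s)]
  have hM : auxM o r = (∑ j, auxF o r s j) +
      ∑ i ∈ Finset.univ.erase s, ∑ j ∈ Finset.univ.erase s, auxF o r i j := by
    rw [hdecomp o]
    congr 1
    apply Finset.sum_congr rfl
    intro i _
    rw [hcol0 i, zero_add]
  have hM2 : auxM o₂ r =
      (∑ i ∈ Finset.univ.erase s, auxF o₂ r i s) +
      ∑ i ∈ Finset.univ.erase s, ∑ j ∈ Finset.univ.erase s, auxF o r i j := by
    rw [hdecomp o₂]
    have h1 : ∑ j, auxF o₂ r s j = 0 := Finset.sum_eq_zero fun j _ => hrow2 j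
    rw [h1, zero_add, Finset.sum_add_distrib]
    congr 1
    apply Finset.sum_congr rfl
    intro i hi
    apply Finset.sum_congr rfl
    intro j hj
    exact hoff i j (Finset.mem_erase.mp hi).1 (Finset.mem_erase.mp hj).1
  have hbound : ∑ i ∈ Finset.univ.erase s, auxF o₂ r i s
      < (n + 1) ^ (n - d) := by
    calc ∑ i ∈ Finset.univ.erase s, auxF o₂ r i s
        ≤ (Finset.univ.erase s).card * (n + 1) ^ (n - (d + 1)) := by
          apply Finset.sum_le_card_nsmul
          intro i _
          exact hcol2 i
      _ ≤ (n - 1) * (n + 1) ^ (n - (d + 1)) := by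
          apply Nat.mul_le_mul_right
          have := Finset.card_erase_of_mem (Finset.mem_univ s)
          simp only [Finset.card_univ, Fintype.card_fin] at this
          omega
      _ < (n + 1) ^ (n - d) := by
          have hpow : (0:ℕ) < (n + 1) ^ (n - (d + 1)) := Nat.pow_pos (by omega)
          have hstep : n - d = (n - (d + 1)) + 1 := by omega
          rw [hstep, pow_succ]
          calc (n - 1) * (n + 1) ^ (n - (d + 1))
              < (n + 1) * (n + 1) ^ (n - (d + 1)) :=
                mul_lt_mul_of_pos_right (by omega) hpow
            _ = (n + 1) ^ (n - (d + 1)) * (n + 1) := Nat.mul_comm _ _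
  rw [hM, hM2]
  have := lt_of_lt_of_le hbound hrow
  omega

lemma auxToRoot (hY : Y.IsTree) (r : Fin n)
    (hd : ∀ u w : Fin n, Y.Adj u w → Y.dist u r ≠ Y.dist w r) :
    ∀ (N : ℕ) (o : Orient Y), IsAcyc o → auxM o r ≤ N →
      ReflTransGen ClickRel o (auxRoot r hd) := by
  intro N
  induction N with
  | zero =>
    intro o ho hM
    by_cases hgood : ∀ i j : Fin n, ¬ (o.dir i j ∧ Y.dist i r = Y.dist j r + 1)
    · -- o = auxRoot
      have : o = auxRoot r hd := by
        apply auxExt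
        intro i j
        constructor
        · intro hij
          have hadj := o.dir_adj i j hij
          refine ⟨hadj, ?_⟩
          have h1 := hd i j hadj
          have h2 : Y.dist i r ≤ Y.dist j r + 1 := by
            have := hY.isConnected.dist_triangle (u := i) (v := j) (w := r)
            have hij1 : Y.dist i j ≤ 1 := by
              have := SimpleGraph.dist_le (SimpleGraph.Walk.cons hadj SimpleGraph.Walk.nil)
              simpa using this
            omega
          have h3 : ¬ (Y.dist i r = Y.dist j r + 1) := fun hc => hgood i j ⟨hij, hc⟩
          omega
        · rintro ⟨hadj, hlt⟩
          by_contra hnd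
          have hji : o.dir j i := by
            have := o.dir_iff j i hadj.symm
            tauto
          have hadj' := hadj.symm
          have h2 : Y.dist j r ≤ Y.dist i r + 1 := by
            have := hY.isConnected.dist_triangle (u := j) (v := i) (w := r)
            have hij1 : Y.dist j i ≤ 1 := by
              have := SimpleGraph.dist_le (SimpleGraph.Walk.cons hadj' SimpleGraph.Walk.nil)
              simpa using this
            omega
          have h3 : Y.dist j r = Y.dist i r + 1 := by omega
          exact hgood j i ⟨hji, h3⟩
      rw [this]
    · -- impossible: measure would be positive
      exfalso
      push_neg at hgood
      obtain ⟨w, u, hwu, hwd⟩ := hgood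
      have : (1:ℕ) ≤ auxM o r := by
        classical
        have hterm : (1:ℕ) ≤ auxF o r w u := by
          rw [auxF, if_pos ⟨hwu, hwd⟩]
          exact Nat.one_le_pow _ _ (by omega)
        calc (1:ℕ) ≤ auxF o r w u := hterm
          _ ≤ ∑ j, auxF o r w j :=
            Finset.single_le_sum (fun i _ => Nat.zero_le _) (Finset.mem_univ u)
          _ ≤ ∑ i, ∑ j, auxF o r i j :=
            Finset.single_le_sum (f := fun i => ∑ j, auxF o r i j)
              (fun i _ => Nat.zero_le _) (Finset.mem_univ w)
      omega
  | succ N ih =>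
    intro o ho hM
    by_cases hgood : ∀ i j : Fin n, ¬ (o.dir i j ∧ Y.dist i r = Y.dist j r + 1)
    · -- same as base case: o = auxRoot
      have : o = auxRoot r hd := by
        apply auxExt
        intro i j
        constructor
        · intro hij
          have hadj := o.dir_adj i j hij
          refine ⟨hadj, ?_⟩
          have h1 := hd i j hadj
          have h2 : Y.dist i r ≤ Y.dist j r + 1 := by
            have := hY.isConnected.dist_triangle (u := i) (v := j) (w := r)
            have hij1 : Y.dist i j ≤ 1 := by
              have := SimpleGraph.dist_le (SimpleGraph.Walk.cons hadj SimpleGraph.Walk.nil)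
              simpa using this
            omega
          have h3 : ¬ (Y.dist i r = Y.dist j r + 1) := fun hc => hgood i j ⟨hij, hc⟩
          omega
        · rintro ⟨hadj, hlt⟩
          by_contra hnd
          have hji : o.dir j i := by
            have := o.dir_iff j i hadj.symm
            tauto
          have hadj' := hadj.symm
          have h2 : Y.dist j r ≤ Y.dist i r + 1 := by
            have := hY.isConnected.dist_triangle (u := j) (v := i) (w := r)
            have hij1 : Y.dist j i ≤ 1 := by
              have := SimpleGraph.dist_le (SimpleGraph.Walk.cons hadj' SimpleGraph.Walk.nil)
              simpa using this
            omega
          have h3 : Y.dist j r = Y.dist i r + 1 := by omega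
          exact hgood j i ⟨hji, h3⟩
      rw [this]
    · push_neg at hgood
      obtain ⟨w, u, hwu, hwd⟩ := hgood
      -- find a source s with directed path to w; s ≠ r
      have hBne : ∃ x, x ∈ {x | ReflTransGen o.dir x w} := ⟨w, ReflTransGen.refl⟩
      obtain ⟨s, hsB, hsmin⟩ := (auxWF o ho).has_min _ hBne
      have hsource : IsSource o s := by
        intro j hj
        exact hsmin j (ReflTransGen.head hj hsB) (TransGen.single hj)
      have hsr : s ≠ r := by
        intro hEq
        exact auxNoPathDown hY r o ho hwu (by omega) (hEq ▸ hsB)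
      have hstep : ClickRel o (auxFlip o {s}) := auxClickFlipSingle o hsource
      have hacyc2 : IsAcyc (auxFlip o {s}) := auxAcycFlip o ho hsource
      have hdec := auxDecrease hY r o hsource hsr
      exact ReflTransGen.head hstep (ih _ hacyc2 (by omega))

end Aux

/-- If `Y` is a tree, any two acyclic orientations are related by a sequence of
source-to-sink operations; equivalently `κ(Y) = 1`. -/
theorem stmt4 {n : ℕ} (hn : 1 ≤ n) (Y : SimpleGraph (Fin n)) (hY : Y.IsTree)
    (o o' : Orient Y) (ho : IsAcyc o) (ho' : IsAcyc o') :
    Relation.ReflTransGen ClickRel o o' := by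
  set r : Fin n := ⟨0, hn⟩ with hr
  have hd : ∀ u w : Fin n, Y.Adj u w → Y.dist u r ≠ Y.dist w r :=
    fun u w hadj => auxAdjDistNe hY r hadj
  have h1 : Relation.ReflTransGen ClickRel o (auxRoot r hd) :=
    auxToRoot hY r hd (auxM o r) o ho (le_refl _)
  have h2 : Relation.ReflTransGen ClickRel o' (auxRoot r hd) :=
    auxToRoot hY r hd (auxM o' r) o' ho' (le_refl _)
  exact h1.trans (auxSymm o' _ ho' h2).2
end

section
/- For the complete graph K_n on n vertices, the number of equivalence classes of acyclic orientations under source-to-sink operations equals (n−1)!; that is, κ(K_n) = (n−1)!. -/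
namespace Stmt5Aux

variable {n : ℕ}
open Fin.NatCast Fin.CommRing

lemma Orient.ext' {N : ℕ} {Y : SimpleGraph (Fin N)} {o o' : Orient Y}
    (h : o.dir = o'.dir) : o = o' := by
  cases o; cases o'; cases h; rfl

lemma not_dir_self (o : Orient (⊤ : SimpleGraph (Fin n))) (v : Fin n) : ¬ o.dir v v := by
  intro h
  simpa using o.dir_adj v v h

lemma dir_asymm (o : Orient (⊤ : SimpleGraph (Fin n))) {i j : Fin n}
    (h : o.dir i j) : ¬ o.dir j i :=
  (o.dir_iff i j (o.dir_adj i j h)).mp h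

lemma dir_total (o : Orient (⊤ : SimpleGraph (Fin n))) {i j : Fin n} (hij : i ≠ j) :
    o.dir i j ∨ o.dir j i := by
  have hadj : (⊤ : SimpleGraph (Fin n)).Adj i j := by simpa using hij
  rcases Classical.em (o.dir j i) with h | h
  · exact Or.inr h
  · exact Or.inl ((o.dir_iff i j hadj).mpr h)

lemma dir_trans {o : Orient (⊤ : SimpleGraph (Fin n))} (ha : IsAcyc o) {i j k : Fin n}
    (h1 : o.dir i j) (h2 : o.dir j k) : o.dir i k := by
  have hik : i ≠ k := by rintro rfl; exact dir_asymm o h1 h2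
  rcases dir_total o hik with h | h
  · exact h
  · exact absurd (Relation.TransGen.head h1
      (Relation.TransGen.head h2 (Relation.TransGen.single h))) (ha i)

/-- The number of in-neighbours of `v`. -/
noncomputable def rank (o : Orient (⊤ : SimpleGraph (Fin n))) (v : Fin n) : ℕ :=
  {j | o.dir j v}.ncard

lemma rank_lt_rank {o : Orient (⊤ : SimpleGraph (Fin n))} (ha : IsAcyc o) {i j : Fin n}
    (h : o.dir i j) : rank o i < rank o j := by
  apply Set.ncard_lt_ncard _ (Set.toFinite _)
  rw [Set.ssubset_def]
  constructor
  · intro k hk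
    exact dir_trans ha hk h
  · intro hsub
    exact not_dir_self o i (hsub h)

lemma rank_lt {o : Orient (⊤ : SimpleGraph (Fin n))} (v : Fin n) : rank o v < n := by
  have h : {j | o.dir j v} ⊂ Set.univ := by
    rw [Set.ssubset_def]
    refine ⟨Set.subset_univ _, fun hsub => not_dir_self o v (hsub (Set.mem_univ v))⟩
  have := Set.ncard_lt_ncard h (Set.toFinite _)
  simpa [rank, Set.ncard_univ] using this

lemma dir_iff_rank {o : Orient (⊤ : SimpleGraph (Fin n))} (ha : IsAcyc o) (i j : Fin n) :
    o.dir i j ↔ rank o i < rank o j := by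
  constructor
  · exact rank_lt_rank ha
  · intro h
    by_contra hd
    rcases eq_or_ne i j with rfl | hij
    · exact lt_irrefl _ h
    · rcases dir_total o hij with h' | h'
      · exact hd h'
      · exact absurd h (not_lt_of_gt (rank_lt_rank ha h'))

/-- The permutation (rank function) associated to an acyclic orientation. -/
noncomputable def toPerm (a : {o : Orient (⊤ : SimpleGraph (Fin (n+1))) // IsAcyc o}) :
    Equiv.Perm (Fin (n+1)) :=
  Equiv.ofBijective (fun v => (⟨rank a.1 v, rank_lt v⟩ : Fin (n+1)))
    ((Finite.injective_iff_bijective).mp (by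
      intro i j hij
      simp only [Fin.mk.injEq] at hij
      by_contra hne
      rcases dir_total a.1 hne with h | h
      · exact absurd hij (Nat.ne_of_lt (rank_lt_rank a.2 h))
      · exact absurd hij.symm (Nat.ne_of_lt (rank_lt_rank a.2 h))))

lemma toPerm_apply (a : {o : Orient (⊤ : SimpleGraph (Fin (n+1))) // IsAcyc o}) (v : Fin (n+1)) :
    toPerm a v = ⟨rank a.1 v, rank_lt v⟩ := rfl

lemma toPerm_lt (a : {o : Orient (⊤ : SimpleGraph (Fin (n+1))) // IsAcyc o}) (i j : Fin (n+1)) :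
    a.1.dir i j ↔ toPerm a i < toPerm a j := by
  rw [toPerm_apply, toPerm_apply, Fin.mk_lt_mk]
  exact dir_iff_rank a.2 i j

/-- The orientation associated to a permutation. -/
def orientOfPerm (σ : Equiv.Perm (Fin (n+1))) : Orient (⊤ : SimpleGraph (Fin (n+1))) where
  dir i j := σ i < σ j
  dir_adj i j h := by
    simp only [SimpleGraph.top_adj]
    rintro rfl
    exact lt_irrefl _ h
  dir_iff i j h := by
    simp only [SimpleGraph.top_adj] at h
    constructor
    · intro h1 h2
      exact lt_asymm h1 h2
    · intro h1
      exact lt_of_le_of_ne (le_of_not_gt h1) (fun he => h (σ.injective he))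

noncomputable def ofPerm (σ : Equiv.Perm (Fin (n+1))) :
    {o : Orient (⊤ : SimpleGraph (Fin (n+1))) // IsAcyc o} :=
  ⟨orientOfPerm σ, by
    intro v hv
    have ht : Transitive (fun i j : Fin (n+1) => σ i < σ j) := fun a b c h1 h2 => lt_trans h1 h2
    rw [show (orientOfPerm σ).dir = (fun i j : Fin (n+1) => σ i < σ j) from rfl,
      @Relation.transGen_eq_self _ (fun i j : Fin (n+1) => σ i < σ j) ⟨fun _ _ _ h1 h2 => ht h1 h2⟩] at hv
    exact lt_irrefl _ hv⟩

lemma ncard_lt_perm (σ : Equiv.Perm (Fin (n+1))) (v : Fin (n+1)) :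
    {j | σ j < σ v}.ncard = (σ v : ℕ) := by
  have h1 : {j | σ j < σ v} = σ.symm '' (Set.Iio (σ v)) := by
    rw [Equiv.image_eq_preimage_symm]
    ext x
    simp [Set.mem_preimage]
  rw [h1, Set.ncard_image_of_injective _ σ.symm.injective, ← Finset.coe_Iio,
    Set.ncard_coe_finset, Fin.card_Iio]

lemma toPerm_ofPerm (σ : Equiv.Perm (Fin (n+1))) : toPerm (ofPerm σ) = σ := by
  apply Equiv.ext
  intro v
  apply Fin.ext
  rw [toPerm_apply]
  exact ncard_lt_perm σ v

lemma ofPerm_toPerm (a : {o : Orient (⊤ : SimpleGraph (Fin (n+1))) // IsAcyc o}) :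
    ofPerm (toPerm a) = a := by
  apply Subtype.ext
  apply Orient.ext'
  funext i j
  exact propext ((toPerm_lt a i j).symm)

lemma toPerm_injective :
    Function.Injective (toPerm (n := n)) := by
  intro a b h
  rw [← ofPerm_toPerm a, ← ofPerm_toPerm b, h]

lemma perm_eq_of_lt_iff (σ τ : Equiv.Perm (Fin (n+1)))
    (h : ∀ i j, σ i < σ j ↔ τ i < τ j) : σ = τ := by
  apply Equiv.ext
  intro v
  apply Fin.ext
  rw [← ncard_lt_perm σ v, ← ncard_lt_perm τ v]
  congr 1
  ext j
  exact h j v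

/-- The basic cyclic shift. -/
noncomputable def rho (n : ℕ) : Equiv.Perm (Fin (n+1)) := Equiv.addRight (-1 : Fin (n+1))

lemma rho_apply (x : Fin (n+1)) : rho n x = x - 1 := by
  show x + (-1) = x - 1
  ring

lemma rho_pow_apply (k : ℕ) : ∀ x : Fin (n+1), ((rho n)^k) x = x - (k : Fin (n+1)) := by
  induction k with
  | zero => simp
  | succ k ih =>
    intro x
    rw [pow_succ, Equiv.Perm.mul_apply, rho_apply, ih (x - 1)]
    push_cast
    ring

lemma key (σ : Equiv.Perm (Fin (n+1))) (v : Fin (n+1)) (hv : σ v = 0) (i j : Fin (n+1)) :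
    (rho n * σ) i < (rho n * σ) j ↔
      (if i = v ∨ j = v then σ j < σ i else σ i < σ j) := by
  have hz : ∀ w, σ w = 0 ↔ w = v := fun w =>
    ⟨fun h => σ.injective (h.trans hv.symm), fun h => h ▸ hv⟩
  have hle : ∀ w : Fin (n+1), (σ w : ℕ) ≤ n := fun w => Fin.is_le _
  have hvv : (σ v : ℕ) = 0 := by rw [hv]; rfl
  simp only [Equiv.Perm.mul_apply, rho_apply, Fin.lt_def, Fin.coe_sub_one]
  by_cases hi : i = v <;> by_cases hj : j = v
  · rw [hi, hj]; simp [hv]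
  · have hσj : ¬ σ j = 0 := fun h => hj ((hz j).mp h)
    have hσj' : (σ j : ℕ) ≠ 0 := fun h => hσj (Fin.ext (by simpa using h))
    rw [hi, if_pos hv, if_neg hσj, if_pos (Or.inl rfl), hvv]
    have := hle j
    omega
  · have hσi : ¬ σ i = 0 := fun h => hi ((hz i).mp h)
    have hσi' : (σ i : ℕ) ≠ 0 := fun h => hσi (Fin.ext (by simpa using h))
    rw [hj, if_pos hv, if_neg hσi, if_pos (Or.inr rfl), hvv]
    have := hle i
    omega
  · have hσi : ¬ σ i = 0 := fun h => hi ((hz i).mp h)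
    have hσj : ¬ σ j = 0 := fun h => hj ((hz j).mp h)
    have hσi' : (σ i : ℕ) ≠ 0 := fun h => hσi (Fin.ext (by simpa using h))
    have hσj' : (σ j : ℕ) ≠ 0 := fun h => hσj (Fin.ext (by simpa using h))
    rw [if_neg hσi, if_neg hσj, if_neg (by tauto)]
    omega

lemma clickRel_iff (a b : {o : Orient (⊤ : SimpleGraph (Fin (n+1))) // IsAcyc o}) :
    ClickRel a.1 b.1 ↔ toPerm b = rho n * toPerm a := by
  constructor
  · rintro ⟨v, hs, hd⟩
    have hv : toPerm a v = 0 := by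
      by_contra h0
      have hpos : (0 : Fin (n+1)) < toPerm a v := Fin.pos_of_ne_zero h0
      have : a.1.dir ((toPerm a).symm 0) v := by
        rw [toPerm_lt a]
        rw [Equiv.apply_symm_apply]
        exact hpos
      exact hs _ this
    apply perm_eq_of_lt_iff
    intro i j
    rw [← toPerm_lt b, hd i j, key (toPerm a) v hv i j]
    split_ifs with h
    · exact toPerm_lt a j i
    · exact toPerm_lt a i j
  · intro h
    refine ⟨(toPerm a).symm 0, ?_, ?_⟩
    · intro j hj
      rw [toPerm_lt a, Equiv.apply_symm_apply] at hj
      exact Fin.not_lt_zero _ hj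
    · intro i j
      rw [toPerm_lt b, h, key (toPerm a) ((toPerm a).symm 0) (Equiv.apply_symm_apply _ _) i j]
      split_ifs with hc
      · exact Iff.symm (toPerm_lt a j i)
      · exact Iff.symm (toPerm_lt a i j)

lemma rho_pow_mul_self (k : ℕ) : (rho n)^((n+1)*k) = 1 := by
  apply Equiv.ext
  intro x
  rw [rho_pow_apply]
  push_cast
  simp [Fin.natCast_self]

abbrev ClickRel' (a b : {o : Orient (⊤ : SimpleGraph (Fin (n+1))) // IsAcyc o}) : Prop :=
  ClickRel a.1 b.1

lemma eqvgen_iff (a b : {o : Orient (⊤ : SimpleGraph (Fin (n+1))) // IsAcyc o}) :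
    Relation.EqvGen ClickRel' a b ↔ ∃ k : ℕ, toPerm b = (rho n)^k * toPerm a := by
  constructor
  · intro h
    induction h with
    | rel x y hxy =>
        exact ⟨1, by rw [pow_one]; exact (clickRel_iff x y).mp hxy⟩
    | refl x => exact ⟨0, by simp⟩
    | symm x y _ ih =>
        obtain ⟨k, hk⟩ := ih
        refine ⟨(n+1)*k - k, ?_⟩
        rw [hk, ← mul_assoc, ← pow_add]
        have hkk : (n+1)*k - k + k = (n+1)*k := by
          have : k ≤ (n+1)*k := Nat.le_mul_of_pos_left k (by omega)
          omega
        rw [hkk, rho_pow_mul_self, one_mul]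
    | trans x y z _ _ ih1 ih2 =>
        obtain ⟨k, hk⟩ := ih1
        obtain ⟨l, hl⟩ := ih2
        exact ⟨l + k, by rw [hl, hk, ← mul_assoc, ← pow_add]⟩
  · rintro ⟨k, hk⟩
    induction k generalizing b with
    | zero =>
        rw [pow_zero, one_mul] at hk
        rw [toPerm_injective hk]
        exact Relation.EqvGen.refl a
    | succ k ih =>
        set c := ofPerm ((rho n)^k * toPerm a) with hc
        have hcp : toPerm c = (rho n)^k * toPerm a := toPerm_ofPerm _
        have h1 : Relation.EqvGen ClickRel' a c := ih c hcp
        have h2 : ClickRel' c b :=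
          (clickRel_iff c b).mpr (by rw [hcp, hk, ← mul_assoc, ← pow_succ'])
        exact Relation.EqvGen.trans a c b h1 (Relation.EqvGen.rel c b h2)

/-- The canonical representative: normalize so that `0 ↦ 0`. -/
noncomputable def F (a : {o : Orient (⊤ : SimpleGraph (Fin (n+1))) // IsAcyc o}) :
    {τ : Equiv.Perm (Fin (n+1)) // τ 0 = 0} :=
  ⟨(rho n)^((toPerm a 0 : ℕ)) * toPerm a, by
    rw [Equiv.Perm.mul_apply, rho_pow_apply, Fin.cast_val_eq_self, sub_self]⟩

lemma F_apply (a : {o : Orient (⊤ : SimpleGraph (Fin (n+1))) // IsAcyc o}) (x : Fin (n+1)) :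
    (F a).1 x = toPerm a x - toPerm a 0 := by
  rw [F, Equiv.Perm.mul_apply, rho_pow_apply, Fin.cast_val_eq_self]

lemma F_eq_of_rel {a b : {o : Orient (⊤ : SimpleGraph (Fin (n+1))) // IsAcyc o}}
    (h : Relation.EqvGen ClickRel' a b) : F a = F b := by
  obtain ⟨k, hk⟩ := (eqvgen_iff a b).mp h
  apply Subtype.ext
  apply Equiv.ext
  intro x
  rw [F_apply, F_apply, hk]
  simp only [Equiv.Perm.mul_apply, rho_pow_apply]
  exact (sub_sub_sub_cancel_right _ _ _).symm

lemma rel_of_F_eq {a b : {o : Orient (⊤ : SimpleGraph (Fin (n+1))) // IsAcyc o}}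
    (h : F a = F b) : Relation.EqvGen ClickRel' a b := by
  rw [eqvgen_iff]
  refine ⟨((toPerm a 0 - toPerm b 0 : Fin (n+1)) : ℕ), ?_⟩
  apply Equiv.ext
  intro x
  have hx := congrArg (fun τ => τ.1 x) h
  simp only [F_apply] at hx
  have hbx : toPerm b x = toPerm a x - toPerm a 0 + toPerm b 0 := by
    rw [hx]; ring
  rw [Equiv.Perm.mul_apply, rho_pow_apply, Fin.cast_val_eq_self, hbx]
  ring

lemma F_surjective : Function.Surjective (F (n := n)) := by
  rintro ⟨τ, hτ⟩
  refine ⟨ofPerm τ, ?_⟩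
  apply Subtype.ext
  apply Equiv.ext
  intro x
  rw [F_apply, toPerm_ofPerm, hτ, sub_zero]

end Stmt5Aux

open Stmt5Aux in
/-- For the complete graph on `n ≥ 1` vertices, the number of equivalence classes
of acyclic orientations under source-to-sink operations is `(n-1)!`. -/
theorem stmt5 {n : ℕ} (hn : 1 ≤ n) :
    Nat.card (Quotient (Relation.EqvGen.setoid
      (fun a b : {o : Orient (⊤ : SimpleGraph (Fin n)) // IsAcyc o} =>
        ClickRel a.1 b.1))) = Nat.factorial (n - 1) := by
  obtain ⟨m, rfl⟩ : ∃ m, n = m + 1 := ⟨n - 1, by omega⟩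
  have hG : ∀ a b : {o : Orient (⊤ : SimpleGraph (Fin (m+1))) // IsAcyc o},
      Relation.EqvGen (fun a b => ClickRel a.1 b.1) a b → F a = F b := fun a b h => F_eq_of_rel h
  let G : Quotient (Relation.EqvGen.setoid
      (fun a b : {o : Orient (⊤ : SimpleGraph (Fin (m+1))) // IsAcyc o} =>
        ClickRel a.1 b.1)) → {τ : Equiv.Perm (Fin (m+1)) // τ 0 = 0} :=
    Quotient.lift F hG
  have hGbij : Function.Bijective G := by
    constructor
    · intro q1 q2
      induction q1 using Quotient.ind
      induction q2 using Quotient.ind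
      intro h
      exact Quotient.sound (rel_of_F_eq h)
    · intro τ
      obtain ⟨a, ha⟩ := F_surjective τ
      exact ⟨Quotient.mk _ a, ha⟩
  have e2 : {τ : Equiv.Perm (Fin (m+1)) // τ 0 = 0} ≃ Equiv.Perm (Fin m) :=
    { toFun := fun τ => (Equiv.Perm.decomposeFin τ.1).2
      invFun := fun σ => ⟨Equiv.Perm.decomposeFin.symm (0, σ), by simp⟩
      left_inv := by
        rintro ⟨τ, hτ⟩
        apply Subtype.ext
        have h0 : τ 0 = (Equiv.Perm.decomposeFin τ).1 := by
          have := Equiv.Perm.decomposeFin_symm_apply_zero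
            (Equiv.Perm.decomposeFin τ).1 (Equiv.Perm.decomposeFin τ).2
          rw [Prod.mk.eta, Equiv.symm_apply_apply] at this
          exact this
        have h1 : (Equiv.Perm.decomposeFin τ).1 = 0 := h0.symm.trans hτ
        have h2 : ((0 : Fin (m+1)), (Equiv.Perm.decomposeFin τ).2) =
            Equiv.Perm.decomposeFin τ := by
          rw [← h1]
        show Equiv.Perm.decomposeFin.symm (0, (Equiv.Perm.decomposeFin τ).2) = τ
        rw [h2, Equiv.symm_apply_apply]
      right_inv := by
        intro σ
        simp }
  rw [Nat.card_congr ((Equiv.ofBijective G hGbij).trans e2), Nat.card_eq_fintype_card,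
    Fintype.card_perm, Fintype.card_fin]
  simp
end

section
/- Fix a vertex v of a connected finite undirected graph Y. Every κ-equivalence class of acyclic orientations of Y contains exactly one acyclic orientation having v as its unique source; i.e., there is a bijection between Acyc_v(Y) and Acyc(Y)/∼_κ. -/
namespace Stmt7Aux

variable {n : ℕ} {Y : SimpleGraph (Fin n)}

lemma Orient.ext' {o o' : Orient Y} (h : ∀ i j, o.dir i j ↔ o'.dir i j) : o = o' := by
  obtain ⟨d, ha, hi⟩ := o
  obtain ⟨d', ha', hi'⟩ := o'
  have : d = d' := by
    funext i j
    exact propext (h i j)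
  subst this
  rfl

lemma dir_of_not_dir {o : Orient Y} {i j : Fin n} (h : Y.Adj i j) (h2 : ¬ o.dir j i) :
    o.dir i j := by
  have := o.dir_iff j i h.symm
  tauto

lemma not_dir_of_dir {o : Orient Y} {i j : Fin n} (h : o.dir i j) : ¬ o.dir j i := by
  have := o.dir_iff i j (o.dir_adj i j h)
  tauto

/-- click at a vertex -/
def clickO (o : Orient Y) (u : Fin n) : Orient Y where
  dir i j := if i = u ∨ j = u then o.dir j i else o.dir i j
  dir_adj := by
    intro i j h
    split at h
    · exact (o.dir_adj j i h).symm
    · exact o.dir_adj i j h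
  dir_iff := by
    intro i j hadj
    have hc : (i = u ∨ j = u) ∨ ¬ (i = u ∨ j = u) := by tauto
    rcases hc with hc | hc
    · have hc' : j = u ∨ i = u := by tauto
      simp only [if_pos hc, if_pos hc']
      exact o.dir_iff j i hadj.symm
    · have hc' : ¬ (j = u ∨ i = u) := by tauto
      simp only [if_neg hc, if_neg hc']
      exact o.dir_iff i j hadj

lemma clickO_dir (o : Orient Y) (u : Fin n) (i j : Fin n) :
    (clickO o u).dir i j ↔ (if i = u ∨ j = u then o.dir j i else o.dir i j) := Iff.rfl

lemma clickRel_clickO {o : Orient Y} {u : Fin n} (hu : IsSource o u) :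
    ClickRel o (clickO o u) :=
  ⟨u, hu, fun _ _ => Iff.rfl⟩

lemma clickO_isAcyc {o : Orient Y} (ho : IsAcyc o) {u : Fin n} (hu : IsSource o u) :
    IsAcyc (clickO o u) := by
  have hnoout : ∀ j, ¬ (clickO o u).dir u j := by
    intro j hj
    rw [clickO_dir, if_pos (Or.inl rfl)] at hj
    exact hu j hj
  have key : ∀ a b, Relation.TransGen (clickO o u).dir a b → b ≠ u →
      Relation.TransGen o.dir a b := by
    intro a b h
    induction h with
    | single h1 =>
      intro hb
      rcases eq_or_ne a u with rfl | ha
      · exact absurd h1 (hnoout _)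
      · refine Relation.TransGen.single ?_
        rwa [clickO_dir, if_neg (by tauto)] at h1
    | tail h1 h2 ih =>
      rename_i b c
      intro hb
      rcases eq_or_ne b u with rfl | hc
      · exact absurd h2 (hnoout _)
      · have h2' : o.dir b c := by
          rwa [clickO_dir, if_neg (by tauto)] at h2
        exact (ih hc).tail h2'
  intro a ha
  rcases eq_or_ne a u with rfl | hne
  · obtain ⟨c, hc, -⟩ := (Relation.TransGen.head'_iff).mp ha
    exact hnoout _ hc
  · exact ho a (key a a ha hne)

/-- existence of a minimal element of a nonempty finset wrt an acyclic orientation -/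
lemma exists_min_elt {o : Orient Y} (ho : IsAcyc o) {A : Finset (Fin n)} (hA : A.Nonempty) :
    ∃ x ∈ A, ∀ j ∈ A, ¬ o.dir j x := by
  have h1 : IsTrans (Fin n) (Relation.TransGen o.dir) := ⟨fun _ _ _ => Relation.TransGen.trans⟩
  have h2 : IsIrrefl (Fin n) (Relation.TransGen o.dir) := ⟨ho⟩
  have hwf := Finite.wellFounded_of_trans_of_irrefl (Relation.TransGen o.dir)
  obtain ⟨x, hx, hmin⟩ := hwf.has_min (↑A) (by exact_mod_cast hA)
  exact ⟨x, hx, fun j hj hd => hmin j hj (Relation.TransGen.single hd)⟩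


lemma flip_step (o : Orient Y) (A : Finset (Fin n)) (x : Fin n) (hxA : x ∈ A) (i j : Fin n) :
    ((if (i ∈ A.erase x ↔ j ∈ A.erase x) then (clickO o x).dir i j else (clickO o x).dir j i) ↔
     (if (i ∈ A ↔ j ∈ A) then o.dir i j else o.dir j i)) := by
  by_cases hix : i = x <;> by_cases hjx : j = x <;>
    by_cases hiA : i ∈ A <;> by_cases hjA : j ∈ A <;>
    simp [clickO_dir, Finset.mem_erase, hix, hjx, hiA, hjA, hxA]

lemma flip_lower : ∀ (k : ℕ) (op : {o : Orient Y // IsAcyc o}) (A : Finset (Fin n)),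
    A.card ≤ k → (∀ j x, x ∈ A → op.1.dir j x → j ∈ A) →
    ∃ p : {o : Orient Y // IsAcyc o},
      Relation.EqvGen (fun a b : {o : Orient Y // IsAcyc o} => ClickRel a.1 b.1) op p ∧
      ∀ i j, p.1.dir i j ↔ (if (i ∈ A ↔ j ∈ A) then op.1.dir i j else op.1.dir j i) := by
  intro k
  induction k with
  | zero =>
    intro op A hcard hlow
    have hA : A = ∅ := Finset.card_eq_zero.mp (Nat.le_zero.mp hcard)
    subst hA
    exact ⟨op, Relation.EqvGen.refl op, by intro i j; simp⟩
  | succ k ih =>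
    intro op A hcard hlow
    rcases A.eq_empty_or_nonempty with rfl | hne
    · exact ⟨op, Relation.EqvGen.refl op, by intro i j; simp⟩
    · obtain ⟨x, hxA, hxmin⟩ := exists_min_elt op.2 hne
      have hsrc : IsSource op.1 x := fun j hj => hxmin j (hlow j x hxA hj) hj
      have ho1 : IsAcyc (clickO op.1 x) := clickO_isAcyc op.2 hsrc
      have hA' : ∀ j y, y ∈ A.erase x → (clickO op.1 x).dir j y → j ∈ A.erase x := by
        intro j y hy hj
        rw [Finset.mem_erase] at hy
        obtain ⟨hyx, hyA⟩ := hy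
        rw [clickO_dir] at hj
        split at hj
        · rename_i hcond
          rcases hcond with rfl | rfl
          · -- j = x : op.dir y x with y ∈ A contradicts minimality
            exact absurd hj (hxmin y hyA)
          · exact absurd rfl hyx
        · rw [Finset.mem_erase]
          refine ⟨?_, hlow j y hyA hj⟩
          rintro rfl
          exact (by tauto : ¬ (j = j ∨ y = j)) (Or.inl rfl)
      have hcard' : (A.erase x).card ≤ k := by
        rw [Finset.card_erase_of_mem hxA]
        omega
      obtain ⟨p, hp, hpdir⟩ := ih ⟨clickO op.1 x, ho1⟩ (A.erase x) hcard' hA'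
      refine ⟨p, Relation.EqvGen.trans _ _ _
        (Relation.EqvGen.rel _ _ (clickRel_clickO hsrc)) hp, ?_⟩
      intro i j
      rw [hpdir i j]
      exact flip_step op.1 A x hxA i j

lemma exists_reach (hY : Y.Connected) (v : Fin n) (op : {o : Orient Y // IsAcyc o}) :
    ∃ p : {o : Orient Y // IsAcyc o},
      Relation.EqvGen (fun a b : {o : Orient Y // IsAcyc o} => ClickRel a.1 b.1) op p ∧
      ∀ x, Relation.ReflTransGen p.1.dir v x := by
  classical
  suffices h : ∀ (k : ℕ) (op : {o : Orient Y // IsAcyc o}),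
      (Finset.univ.filter fun x => ¬ Relation.ReflTransGen op.1.dir v x).card ≤ k →
      ∃ p : {o : Orient Y // IsAcyc o},
        Relation.EqvGen (fun a b : {o : Orient Y // IsAcyc o} => ClickRel a.1 b.1) op p ∧
        ∀ x, Relation.ReflTransGen p.1.dir v x from h _ op le_rfl
  intro k
  induction k with
  | zero =>
    intro op hcard
    refine ⟨op, Relation.EqvGen.refl op, fun x => ?_⟩
    by_contra hx
    have hmem : x ∈ Finset.univ.filter fun x => ¬ Relation.ReflTransGen op.1.dir v x := by
      simp [hx]
    rw [Finset.card_eq_zero.mp (Nat.le_zero.mp hcard)] at hmem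
    exact absurd hmem (Finset.notMem_empty x)
  | succ k ih =>
    intro op hcard
    set A := Finset.univ.filter fun x => ¬ Relation.ReflTransGen op.1.dir v x with hAdef
    have hAmem : ∀ x, x ∈ A ↔ ¬ Relation.ReflTransGen op.1.dir v x := by
      intro x; simp [hAdef]
    rcases A.eq_empty_or_nonempty with hA | hne
    · refine ⟨op, Relation.EqvGen.refl op, fun x => ?_⟩
      by_contra hx
      have hmem : x ∈ A := (hAmem x).mpr hx
      rw [hA] at hmem
      exact absurd hmem (Finset.notMem_empty x)
    · have hlow : ∀ j x, x ∈ A → op.1.dir j x → j ∈ A := by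
        intro j x hx hj
        rw [hAmem] at hx ⊢
        intro hrj
        exact hx (hrj.tail hj)
      obtain ⟨p, hp, hpdir⟩ := flip_lower A.card op A le_rfl hlow
      have hreach1 : ∀ x, Relation.ReflTransGen op.1.dir v x →
          Relation.ReflTransGen p.1.dir v x := by
        intro x hx
        induction hx with
        | refl => exact Relation.ReflTransGen.refl
        | tail hab hbc ihr =>
          rename_i b c
          have hbA : b ∉ A := by rw [hAmem]; exact not_not_intro hab
          have hcA : c ∉ A := by rw [hAmem]; exact not_not_intro (hab.tail hbc)
          have hpd : p.1.dir b c := by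
            rw [hpdir, if_pos (by tauto)]
            exact hbc
          exact ihr.tail hpd
      -- find a crossing edge
      obtain ⟨a0, ha0⟩ := hne
      have hvA : v ∉ A := by
        rw [hAmem]
        exact not_not_intro Relation.ReflTransGen.refl
      obtain ⟨w⟩ := hY.preconnected v a0
      have cross : ∀ (s t : Fin n), Y.Walk s t → s ∉ A → t ∈ A →
          ∃ u a, u ∉ A ∧ a ∈ A ∧ Y.Adj u a := by
        intro s t w
        induction w with
        | nil => intro hs ht; exact absurd ht hs
        | cons h q ihw =>
          rename_i s' b t'
          intro hs ht
          by_cases hb : b ∈ A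
          · exact ⟨s', b, hs, hb, h⟩
          · exact ihw hb ht
      obtain ⟨u, a, huA, haA, hadj⟩ := cross v a0 w hvA ha0
      have hru : Relation.ReflTransGen op.1.dir v u := by
        by_contra h
        exact huA ((hAmem u).mpr h)
      have hnua : ¬ op.1.dir u a := by
        intro h
        exact ((hAmem a).mp haA) (hru.tail h)
      have hau : op.1.dir a u := dir_of_not_dir hadj.symm hnua
      have hpua : p.1.dir u a := by
        rw [hpdir, if_neg (by tauto)]
        exact hau
      have hrpa : Relation.ReflTransGen p.1.dir v a := (hreach1 u hru).tail hpua
      -- measure decreases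
      have hsub : (Finset.univ.filter fun x => ¬ Relation.ReflTransGen p.1.dir v x)
          ⊆ A.erase a := by
        intro x hx
        rw [Finset.mem_filter] at hx
        rw [Finset.mem_erase]
        constructor
        · rintro rfl
          exact hx.2 hrpa
        · by_contra hxA
          exact hx.2 (hreach1 x (by by_contra h; exact hxA ((hAmem x).mpr h)))
      have hcard2 : (Finset.univ.filter fun x => ¬ Relation.ReflTransGen p.1.dir v x).card ≤ k := by
        have h1 := Finset.card_le_card hsub
        have h2 : (A.erase a).card = A.card - 1 := Finset.card_erase_of_mem haA
        have h3 : 1 ≤ A.card := Finset.card_pos.mpr ⟨a, haA⟩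
        omega
      obtain ⟨q, hq, hqr⟩ := ih p hcard2
      exact ⟨q, Relation.EqvGen.trans _ _ _ hp hq, hqr⟩

open scoped Classical in
noncomputable def tval (o : Orient Y) (i j : Fin n) : ℤ := if o.dir i j then 1 else -1

lemma delta_of_eqvgen {a b : {o : Orient Y // IsAcyc o}}
    (h : Relation.EqvGen (fun a b : {o : Orient Y // IsAcyc o} => ClickRel a.1 b.1) a b) :
    ∃ δ : Fin n → ℤ, ∀ i j, Y.Adj i j → δ j - δ i = tval a.1 i j - tval b.1 i j := by
  classical
  induction h with
  | rel x y hxy =>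
    obtain ⟨u, hu, hform⟩ := hxy
    refine ⟨fun w => if w = u then -2 else 0, ?_⟩
    intro i j hadj
    have hij : i ≠ j := hadj.ne
    by_cases hi : i = u
    · subst hi
      have hj : j ≠ i := fun h => hij h.symm
      have h1 : x.1.dir i j := dir_of_not_dir hadj (hu j)
      have h2 : ¬ y.1.dir i j := by
        rw [hform, if_pos (Or.inl rfl)]
        exact hu j
      simp [tval, h1, h2, if_neg hj]
    · by_cases hjv : j = u
      · subst hjv
        have h1 : ¬ x.1.dir i j := hu i
        have h2 : y.1.dir i j := by
          rw [hform, if_pos (Or.inr rfl)]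
          exact dir_of_not_dir hadj.symm (hu i)
        simp [tval, h1, h2, if_neg hi]
      · have h0 : y.1.dir i j ↔ x.1.dir i j := by
          rw [hform, if_neg (by tauto)]
        simp only [tval, if_neg hi, if_neg hjv]
        by_cases hd : x.1.dir i j
        · simp [hd, h0.mpr hd]
        · have h2 : ¬ (↑y : Orient Y).dir i j := fun h => hd (h0.mp h)
          simp [hd, h2]
  | refl x => exact ⟨0, by intro i j _; simp⟩
  | symm x y h ihs =>
    obtain ⟨δ, hδ⟩ := ihs
    refine ⟨fun w => -δ w, fun i j ha => ?_⟩
    have := hδ i j ha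
    simp only
    linarith
  | trans x y z h1 h2 ih1 ih2 =>
    obtain ⟨δ1, hδ1⟩ := ih1
    obtain ⟨δ2, hδ2⟩ := ih2
    refine ⟨fun w => δ1 w + δ2 w, fun i j ha => ?_⟩
    have := hδ1 i j ha
    have := hδ2 i j ha
    simp only
    linarith

lemma no_descent {r : Fin n → Fin n → Prop} (hr : ∀ w, ¬ Relation.TransGen r w w)
    {P : Fin n → Prop} (x₀ : Fin n) (h₀ : P x₀)
    (step : ∀ x, P x → ∃ j, r j x ∧ P j) : False := by
  choose F h1 h2 using step
  let g : ℕ → {x : Fin n // P x} := fun k =>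
    Nat.rec ⟨x₀, h₀⟩ (fun _ p => ⟨F p.1 p.2, h2 p.1 p.2⟩) k
  have hstep : ∀ k, r (g (k+1)).1 (g k).1 := fun k => h1 _ _
  have hchain : ∀ a d, Relation.TransGen r (g (a + d + 1)).1 (g a).1 := by
    intro a d
    induction d with
    | zero => exact Relation.TransGen.single (hstep a)
    | succ d ihd => exact (Relation.TransGen.single (hstep (a + d + 1))).trans ihd
  obtain ⟨a, b, hab, heq⟩ := Finite.exists_ne_map_eq_of_infinite (fun k => (g k).1)
  have heq' : (g a).1 = (g b).1 := heq
  rcases hab.lt_or_gt with h | h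
  · obtain ⟨d, rfl⟩ := Nat.exists_eq_add_of_lt h
    have hc := hchain a d
    rw [heq'] at hc
    exact hr _ hc
  · obtain ⟨d, rfl⟩ := Nat.exists_eq_add_of_lt h
    have hc := hchain b d
    rw [← heq'] at hc
    exact hr _ hc

lemma eq_of_delta (v : Fin n) {o o' : Orient Y} (ho : IsAcyc o) (ho' : IsAcyc o')
    (hs : ∀ w, w ≠ v → ∃ j, o.dir j w) (hs' : ∀ w, w ≠ v → ∃ j, o'.dir j w)
    (δ : Fin n → ℤ) (hδ : ∀ i j, Y.Adj i j → δ j - δ i = tval o i j - tval o' i j) :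
    o = o' := by
  classical
  have hconst : ∀ x, δ x = δ v := by
    by_contra hnc
    push_neg at hnc
    obtain ⟨x₀, -, hmax⟩ := Finset.exists_max_image Finset.univ δ ⟨v, Finset.mem_univ v⟩
    obtain ⟨x₁, -, hmin⟩ := Finset.exists_min_image Finset.univ δ ⟨v, Finset.mem_univ v⟩
    have hmax' : ∀ x, δ x ≤ δ x₀ := fun x => hmax x (Finset.mem_univ x)
    have hmin' : ∀ x, δ x₁ ≤ δ x := fun x => hmin x (Finset.mem_univ x)
    rcases lt_or_ge (δ v) (δ x₀) with hgt | hle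
    · refine no_descent ho' (P := fun x => δ x = δ x₀) x₀ rfl ?_
      intro x hx
      have hxv : x ≠ v := by
        intro h
        rw [h] at hx
        linarith
      obtain ⟨j, hj⟩ := hs' x hxv
      have hadj : Y.Adj j x := o'.dir_adj j x hj
      have h1 := hδ j x hadj
      have ht' : tval o' j x = 1 := by simp [tval, hj]
      have ht : tval o j x ≤ 1 ∧ -1 ≤ tval o j x := by
        unfold tval; split <;> omega
      have hjle : δ j ≤ δ x₀ := hmax' j
      exact ⟨j, hj, by omega⟩
    · have hlt : δ x₁ < δ v := by
        rcases lt_or_ge (δ x₁) (δ v) with h | h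
        · exact h
        · exfalso
          obtain ⟨x, hx⟩ := hnc
          exact hx (le_antisymm (le_trans (hmax' x) hle) (le_trans h (hmin' x)))
      refine no_descent ho (P := fun x => δ x = δ x₁) x₁ rfl ?_
      intro x hx
      have hxv : x ≠ v := by
        intro h
        rw [h] at hx
        linarith
      obtain ⟨j, hj⟩ := hs x hxv
      have hadj : Y.Adj j x := o.dir_adj j x hj
      have h1 := hδ j x hadj
      have ht : tval o j x = 1 := by simp [tval, hj]
      have ht' : tval o' j x ≤ 1 ∧ -1 ≤ tval o' j x := by
        unfold tval; split <;> omega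
      have hjge : δ x₁ ≤ δ j := hmin' j
      exact ⟨j, hj, by omega⟩
  apply Orient.ext'
  intro i j
  by_cases hadj : Y.Adj i j
  · have h1 := hδ i j hadj
    rw [hconst i, hconst j] at h1
    have heq : tval o i j = tval o' i j := by linarith
    unfold tval at heq
    constructor <;> intro h
    · by_contra h2
      rw [if_pos h, if_neg h2] at heq
      omega
    · by_contra h2
      rw [if_neg h2, if_pos h] at heq
      omega
  · constructor <;> intro h
    · exact absurd (o.dir_adj i j h) hadj
    · exact absurd (o'.dir_adj i j h) hadj

end Stmt7Aux

/-- For a connected graph `Y` and fixed vertex `v`, every κ-equivalence class of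
acyclic orientations contains exactly one orientation whose unique source is `v`;
i.e. `Acyc_v(Y)` is a transversal of `Acyc(Y)/∼_κ`. -/
theorem stmt7 {n : ℕ} (Y : SimpleGraph (Fin n)) (hY : Y.Connected) (v : Fin n)
    (o : {o : Orient Y // IsAcyc o}) :
    ∃! o' : {o : Orient Y // IsAcyc o},
      Relation.EqvGen (fun a b : {o : Orient Y // IsAcyc o} => ClickRel a.1 b.1) o o' ∧
      IsSource o'.1 v ∧ ∀ w, IsSource o'.1 w → w = v := by
  obtain ⟨p, hp, hpr⟩ := Stmt7Aux.exists_reach hY v o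
  have hsrc : IsSource p.1 v := by
    intro j hj
    exact p.2 v (Relation.TransGen.tail' (hpr j) hj)
  have huniq : ∀ w, IsSource p.1 w → w = v := by
    intro w hw
    rcases (hpr w).cases_tail with h | ⟨c, -, hc⟩
    · exact h
    · exact absurd hc (hw c)
  refine ⟨p, ⟨hp, hsrc, huniq⟩, ?_⟩
  rintro q ⟨hq, hqs, hqu⟩
  have heqv : Relation.EqvGen (fun a b : {o : Orient Y // IsAcyc o} => ClickRel a.1 b.1) q p :=
    Relation.EqvGen.trans _ _ _ (Relation.EqvGen.symm _ _ hq) hp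
  obtain ⟨δ, hδ⟩ := Stmt7Aux.delta_of_eqvgen heqv
  have hsq : ∀ w, w ≠ v → ∃ j, q.1.dir j w := by
    intro w hw
    by_contra h
    push_neg at h
    exact hw (hqu w h)
  have hsp : ∀ w, w ≠ v → ∃ j, p.1.dir j w := by
    intro w hw
    by_contra h
    push_neg at h
    exact hw (huniq w h)
  exact Subtype.ext (Stmt7Aux.eq_of_delta v q.2 p.2 hsq hsp δ hδ)
end

section
/- If Z is a subgraph of a finite undirected graph Y, then α(Z) ≤ α(Y), where α denotes the number of acyclic orientations. In particular α is monotone under adding edges. -/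
lemma orient_ext {n : ℕ} {Y : SimpleGraph (Fin n)} {o₁ o₂ : Orient Y}
    (h : o₁.dir = o₂.dir) : o₁ = o₂ := by
  cases o₁; cases o₂; simp_all

instance {n : ℕ} (Y : SimpleGraph (Fin n)) : Finite (Orient Y) :=
  Finite.of_injective (fun o => o.dir) (fun _ _ h => orient_ext h)

/-- Any acyclic orientation is contained in a linear order. -/
lemma exists_linear {n : ℕ} {Z : SimpleGraph (Fin n)} (o : Orient Z) (ho : IsAcyc o) :
    ∃ s : Fin n → Fin n → Prop, IsLinearOrder (Fin n) s ∧
      ∀ i j, Relation.TransGen o.dir i j → s i j := by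
  let r : Fin n → Fin n → Prop := fun a b => Relation.TransGen o.dir a b ∨ a = b
  have : IsPartialOrder (Fin n) r := by
    refine { refl := fun a => Or.inr rfl, trans := ?_, antisymm := ?_ }
    · intro a b c hab hbc
      rcases hab with hab | rfl
      · rcases hbc with hbc | rfl
        · exact Or.inl (hab.trans hbc)
        · exact Or.inl hab
      · exact hbc
    · intro a b hab hba
      rcases hab with hab | rfl
      · rcases hba with hba | rfl
        · exact absurd (hab.trans hba) (ho a)
        · rfl
      · rfl
  obtain ⟨s, hs, hrs⟩ := extend_partialOrder r
  exact ⟨s, hs, fun i j h => hrs i j (Or.inl h)⟩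

/-- If `Z` is a subgraph of `Y` (on the same vertex set), then the number of
acyclic orientations satisfies `α(Z) ≤ α(Y)`. -/
theorem stmt8 {n : ℕ} (Z Y : SimpleGraph (Fin n)) (hZY : Z ≤ Y) :
    Nat.card {o : Orient Z // IsAcyc o} ≤ Nat.card {o : Orient Y // IsAcyc o} := by
  classical
  -- build the extension map
  have key : ∀ o : {o : Orient Z // IsAcyc o}, ∃ p : Orient Y,
      IsAcyc p ∧ ∀ i j, p.dir i j ↔ (Y.Adj i j ∧
        (Classical.choose (exists_linear o.1 o.2)) i j) := by
    intro o
    obtain ⟨hs, hrs⟩ := Classical.choose_spec (exists_linear o.1 o.2)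
    set s := Classical.choose (exists_linear o.1 o.2) with hsdef
    refine ⟨⟨fun i j => Y.Adj i j ∧ s i j, fun i j h => h.1, ?_⟩, ?_, fun i j => Iff.rfl⟩
    · intro i j hadj
      have hne : i ≠ j := hadj.ne
      constructor
      · rintro ⟨_, hij⟩ ⟨_, hji⟩
        exact hne (hs.toIsPartialOrder.toAntisymm.antisymm _ _ hij hji)
      · intro h
        refine ⟨hadj, ?_⟩
        rcases hs.toTotal.total i j with h' | h'
        · exact h'
        · exact absurd ⟨hadj.symm, h'⟩ h
    · -- acyclic
      intro v hv
      -- strict relation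
      have : ∀ a b, Relation.TransGen (fun i j => Y.Adj i j ∧ s i j) a b → s a b ∧ a ≠ b := by
        intro a b h
        induction h with
        | single h => exact ⟨h.2, h.1.ne⟩
        | tail _ h ih =>
          refine ⟨hs.toIsPartialOrder.toIsTrans.trans _ _ _ ih.1 h.2, ?_⟩
          rintro rfl
          exact h.1.ne (hs.toIsPartialOrder.toAntisymm.antisymm _ _ h.2 ih.1)
      exact (this v v hv).2 rfl
  choose f hf₁ hf₂ using key
  have hinj : Function.Injective (fun o => (⟨f o, hf₁ o⟩ : {o : Orient Y // IsAcyc o})) := by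
    intro o₁ o₂ h
    have hdir : (f o₁).dir = (f o₂).dir := by
      simpa using congrArg (fun x => (Orient.dir x.1)) h
    -- recover o.dir from (f o).dir on Z-edges
    have hrec : ∀ (o : {o : Orient Z // IsAcyc o}) (i j), o.1.dir i j ↔ (Z.Adj i j ∧ (f o).dir i j) := by
      intro o i j
      obtain ⟨hs, hrs⟩ := Classical.choose_spec (exists_linear o.1 o.2)
      constructor
      · intro h
        have hZ := o.1.dir_adj i j h
        exact ⟨hZ, (hf₂ o i j).2 ⟨hZY hZ, hrs i j (Relation.TransGen.single h)⟩⟩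
      · rintro ⟨hZ, hd⟩
        by_contra hnd
        have hji : o.1.dir j i := by
          have := o.1.dir_iff i j hZ
          tauto
        have hsji := hrs j i (Relation.TransGen.single hji)
        have hsij := ((hf₂ o i j).1 hd).2
        exact hZ.ne (hs.toIsPartialOrder.toAntisymm.antisymm _ _ hsij hsji)
    apply Subtype.ext
    apply orient_ext
    funext i j
    apply propext
    rw [hrec o₁ i j, hrec o₂ i j, hdir]
  exact Nat.card_le_card_of_injective _ hinj
end

section
/- For the cycle graph Circ_n (n ≥ 3), the number of κ-equivalence classes of acyclic orientations under source-to-sink operations is n − 1; i.e., κ(Circ_n) = n − 1. -/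
def circGraph (n : ℕ) : SimpleGraph (Fin n) :=
  SimpleGraph.fromRel (fun i j => (i.val + 1) % n = j.val)

namespace CycProof

open Fin.CommRing

variable {n : ℕ} [NeZero n]

lemma one_ne_zero' (hn : 3 ≤ n) : (1 : Fin n) ≠ 0 := by
  intro h
  have h1 : (1 : Fin n).val = 1 := by
    rw [Fin.val_one', Nat.mod_eq_of_lt (by omega : 1 < n)]
  rw [h] at h1
  simp at h1

lemma two_ne_zero' (hn : 3 ≤ n) : (2 : Fin n) ≠ 0 := by
  intro h
  have h1 : (2 : Fin n).val = 2 := by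
    have : (2 : Fin n) = ((2 : ℕ) : Fin n) := by norm_cast
    rw [this, Fin.val_natCast, Nat.mod_eq_of_lt (by omega : 2 < n)]
  rw [h] at h1
  simp at h1

lemma add_one_ne (hn : 3 ≤ n) (i : Fin n) : i + 1 ≠ i := by
  intro h
  exact one_ne_zero' hn (add_eq_left.mp h)

lemma add_two_ne (hn : 3 ≤ n) (i : Fin n) : i + 1 + 1 ≠ i := by
  intro h
  rw [add_assoc, one_add_one_eq_two] at h
  exact two_ne_zero' hn (add_eq_left.mp h)

lemma sub_one_ne (hn : 3 ≤ n) (i : Fin n) : i - 1 ≠ i := by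
  intro h
  exact one_ne_zero' hn (sub_eq_self.mp h)

lemma sub_one_add_one (i : Fin n) : i - 1 + 1 = i := sub_add_cancel i 1

lemma add_one_sub_one (i : Fin n) : i + 1 - 1 = i := add_sub_cancel_right i 1

lemma adj_iff (hn : 3 ≤ n) {i j : Fin n} :
    (circGraph n).Adj i j ↔ (i + 1 = j ∨ j + 1 = i) := by
  have hval : ∀ a b : Fin n, ((a.val + 1) % n = b.val) ↔ a + 1 = b := by
    intro a b
    rw [Fin.ext_iff, Fin.add_def]
    have h1 : (1 : Fin n).val = 1 := by
      rw [Fin.val_one', Nat.mod_eq_of_lt (by omega : 1 < n)]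
    rw [h1]
  constructor
  · rintro ⟨hne, h | h⟩
    · exact Or.inl ((hval i j).mp h)
    · exact Or.inr ((hval j i).mp h)
  · rintro (h | h)
    · exact ⟨fun he => add_one_ne hn i (he ▸ h), Or.inl ((hval i j).mpr h)⟩
    · exact ⟨fun he => add_one_ne hn j (he ▸ h :), Or.inr ((hval j i).mpr h)⟩

def fdir (f : Fin n → Bool) : Fin n → Fin n → Prop :=
  fun i j => (i + 1 = j ∧ f i = true) ∨ (j + 1 = i ∧ f j = false)

def mkO (hn : 3 ≤ n) (f : Fin n → Bool) : Orient (circGraph n) where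
  dir := fdir f
  dir_adj := by
    rintro i j (⟨h, _⟩ | ⟨h, _⟩)
    · exact (adj_iff hn).mpr (Or.inl h)
    · exact (adj_iff hn).mpr (Or.inr h)
  dir_iff := by
    intro i j hadj
    rcases (adj_iff hn).mp hadj with h | h
    · have h2 : j + 1 ≠ i := by rw [← h]; exact add_two_ne hn i
      subst h
      simp [fdir, h2]
    · have h2 : i + 1 ≠ j := by rw [← h]; exact add_two_ne hn j
      subst h
      simp [fdir, h2]

noncomputable def Fo {Y : SimpleGraph (Fin n)} (o : Orient Y) : Fin n → Bool :=
  fun i => @decide (o.dir i (i + 1)) (Classical.propDecidable _)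

lemma Fo_iff {Y : SimpleGraph (Fin n)} (o : Orient Y) (i : Fin n) :
    Fo o i = true ↔ o.dir i (i + 1) := by
  simp [Fo]

lemma Fo_false_iff {Y : SimpleGraph (Fin n)} (o : Orient Y) (i : Fin n) :
    Fo o i = false ↔ ¬ o.dir i (i + 1) := by
  simp [Fo]

lemma dir_iff_fdir (hn : 3 ≤ n) (o : Orient (circGraph n)) (i j : Fin n) :
    o.dir i j ↔ fdir (Fo o) i j := by
  constructor
  · intro h
    rcases (adj_iff hn).mp (o.dir_adj i j h) with h1 | h1
    · exact Or.inl ⟨h1, (Fo_iff o i).mpr (h1 ▸ h)⟩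
    · refine Or.inr ⟨h1, (Fo_false_iff o j).mpr ?_⟩
      intro h2
      have hadj : (circGraph n).Adj j (j + 1) := (adj_iff hn).mpr (Or.inl rfl)
      exact ((o.dir_iff j (j+1) hadj).mp h2) (h1 ▸ h)
  · rintro (⟨h1, h2⟩ | ⟨h1, h2⟩)
    · exact h1 ▸ (Fo_iff o i).mp h2
    · have hadj : (circGraph n).Adj j (j + 1) := (adj_iff hn).mpr (Or.inl rfl)
      have := (Fo_false_iff o j).mp h2
      have h3 : o.dir (j + 1) j := by
        by_contra hc
        exact this ((o.dir_iff j (j+1) hadj).mpr hc)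
      exact h1 ▸ h3

omit [NeZero n] in
lemma orient_ext {Y : SimpleGraph (Fin n)} {o o' : Orient Y}
    (h : ∀ i j, o.dir i j ↔ o'.dir i j) : o = o' := by
  obtain ⟨d, hA, hI⟩ := o
  obtain ⟨d', hA', hI'⟩ := o'
  have : d = d' := by
    funext i j
    exact propext (h i j)
  subst this
  rfl

lemma mk_Fo (hn : 3 ≤ n) (o : Orient (circGraph n)) : mkO hn (Fo o) = o :=
  orient_ext (fun i j => (dir_iff_fdir hn o i j).symm)

lemma Fo_mk (hn : 3 ≤ n) (f : Fin n → Bool) : Fo (mkO hn f) = f := by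
  funext i
  have h2 : i + 1 + 1 ≠ i := add_two_ne hn i
  rcases Bool.eq_false_or_eq_true (f i) with hf | hf
  · rw [hf, Fo_iff]
    exact Or.inl ⟨rfl, hf⟩
  · rw [hf, Fo_false_iff]
    rintro (⟨_, hc⟩ | ⟨hc, _⟩)
    · rw [hf] at hc; exact Bool.noConfusion hc
    · exact h2 hc

omit [NeZero n] in
lemma lt_of_transGen {α : Type*} {r : α → α → Prop} {φ : α → ℤ}
    (hm : ∀ x y, r x y → φ x < φ y) {a b : α} (h : Relation.TransGen r a b) :
    φ a < φ b := by
  induction h with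
  | single h => exact hm _ _ h
  | tail _ h ih => exact ih.trans (hm _ _ h)

lemma neg_one_val (hn : 3 ≤ n) : ((-1 : Fin n)).val = n - 1 := by
  have h1 : (1 : Fin n).val = 1 := by
    rw [Fin.val_one', Nat.mod_eq_of_lt (by omega : 1 < n)]
  rw [Fin.neg_def]
  show (n - (1 : Fin n).val) % n = n - 1
  rw [h1, Nat.mod_eq_of_lt (by omega : n - 1 < n)]

lemma val_add_one_of_ne (hn : 3 ≤ n) {y : Fin n} (hy : y ≠ -1) :
    (y + 1).val = y.val + 1 := by
  have h1 : (1 : Fin n).val = 1 := by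
    rw [Fin.val_one', Nat.mod_eq_of_lt (by omega : 1 < n)]
  have hv : y.val ≠ n - 1 := by
    intro h
    exact hy (Fin.ext (by rw [h, neg_one_val hn]))
  have hlt : y.val + 1 < n := by have := y.isLt; omega
  rw [Fin.add_def]
  show (y.val + (1 : Fin n).val) % n = y.val + 1
  rw [h1, Nat.mod_eq_of_lt hlt]

lemma acyc_of_nonconst (hn : 3 ≤ n) (f : Fin n → Bool)
    {s t : Fin n} (hs : f s = true) (ht : f t = false) :
    IsAcyc (mkO hn f) := by
  classical
  set g : ℕ → ℤ := fun j => if f (t + 1 + (j : Fin n)) = true then (n : ℤ) else -1 with hg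
  set φ : Fin n → ℤ := fun x => ∑ j ∈ Finset.range ((x - (t + 1)).val), g j with hφ
  have hst : s ≠ t := fun h => by rw [h, ht] at hs; exact Bool.noConfusion hs
  have hback : ∀ x : Fin n, t + 1 + (((x - (t + 1)).val : ℕ) : Fin n) = x := by
    intro x
    rw [Fin.cast_val_eq_self]
    abel
  have hne_neg : ∀ x : Fin n, x ≠ t → x - (t + 1) ≠ -1 := by
    intro x hx h
    apply hx
    have : x = -1 + (t + 1) := by rw [← h]; abel
    rw [this]; abel
  have hstep : ∀ x : Fin n, x ≠ t → φ (x + 1) = φ x + (if f x = true then (n : ℤ) else -1) := by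
    intro x hx
    have h1 : (x + 1) - (t + 1) = (x - (t + 1)) + 1 := by abel
    have h2 : ((x - (t + 1)) + 1).val = (x - (t + 1)).val + 1 :=
      val_add_one_of_ne hn (hne_neg x hx)
    rw [hφ]
    simp only
    rw [h1, h2, Finset.sum_range_succ]
    congr 1
    rw [hg]
    simp only
    rw [hback x]
  -- the wrap-around edge: φ (t + 1) < φ t
  have hwrap : φ (t + 1) < φ t := by
    have h0 : φ (t + 1) = 0 := by
      rw [hφ]; simp
    have h1 : (t - (t + 1)) = -1 := by abel
    have h2 : φ t = ∑ j ∈ Finset.range (n - 1), g j := by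
      rw [hφ]; simp only; rw [h1, neg_one_val hn]
    set j₀ : ℕ := (s - (t + 1)).val with hj₀
    have hj₀lt : j₀ < n - 1 := by
      have h3 : s - (t + 1) ≠ -1 := hne_neg s hst
      have h4 : j₀ ≠ n - 1 := by
        intro h
        apply h3
        apply Fin.ext
        rw [neg_one_val hn, ← h]
      have := (s - (t + 1)).isLt
      omega
    have hj₀mem : j₀ ∈ Finset.range (n - 1) := Finset.mem_range.mpr hj₀lt
    have hgj₀ : g j₀ = (n : ℤ) := by
      rw [hg]; simp only; rw [hj₀, hback s, hs]; simp
    have hsum : ∑ j ∈ Finset.range (n - 1), g j =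
        g j₀ + ∑ j ∈ (Finset.range (n - 1)).erase j₀, g j :=
      (Finset.add_sum_erase _ g hj₀mem).symm
    have hbound : ∀ j ∈ (Finset.range (n - 1)).erase j₀, (-1 : ℤ) ≤ g j := by
      intro j _
      rw [hg]; simp only
      split <;> omega
    have hcard : ((Finset.range (n - 1)).erase j₀).card = n - 2 := by
      rw [Finset.card_erase_of_mem hj₀mem, Finset.card_range]
      omega
    have h5 : (-1 : ℤ) * (n - 2 : ℕ) ≤ ∑ j ∈ (Finset.range (n - 1)).erase j₀, g j := by
      calc (-1 : ℤ) * (n - 2 : ℕ) = ∑ _j ∈ (Finset.range (n - 1)).erase j₀, (-1 : ℤ) := by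
            rw [Finset.sum_const, hcard]; ring
        _ ≤ _ := Finset.sum_le_sum hbound
    rw [h0, h2, hsum, hgj₀]
    have hn2 : ((n - 2 : ℕ) : ℤ) = (n : ℤ) - 2 := by
      have : 2 ≤ n := by omega
      omega
    rw [hn2] at h5
    have h7 : (3 : ℤ) ≤ (n : ℤ) := by exact_mod_cast hn
    linarith
  have hmono : ∀ x y, (mkO hn f).dir x y → φ x < φ y := by
    rintro x y (⟨h1, h2⟩ | ⟨h1, h2⟩)
    · have hx : x ≠ t := fun h => by rw [h, ht] at h2; exact Bool.noConfusion h2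
      rw [← h1, hstep x hx, h2]
      have h7 : (3 : ℤ) ≤ (n : ℤ) := by exact_mod_cast hn
      have he : (if (true = true) then (n : ℤ) else -1) = (n : ℤ) := by norm_num
      rw [he]
      linarith
    · by_cases hy : y = t
      · subst hy; rw [← h1]; exact hwrap
      · rw [← h1, hstep y hy, h2]
        have he : (if (false = true) then (n : ℤ) else -1) = -1 := by norm_num
        rw [he]
        omega
  intro v hv
  exact absurd (lt_of_transGen hmono hv) (lt_irrefl _)

lemma nonconst_of_acyc (hn : 3 ≤ n) (o : Orient (circGraph n)) (h : IsAcyc o) :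
    (∃ s, Fo o s = true) ∧ (∃ t, Fo o t = false) := by
  constructor
  · by_contra hc
    push_neg at hc
    have hall : ∀ i : Fin n, o.dir (i + 1) i := by
      intro i
      have h1 : ¬ o.dir i (i + 1) := by
        intro hd
        exact absurd ((Fo_iff o i).mpr hd) (by simpa using hc i)
      have hadj : (circGraph n).Adj i (i + 1) := (adj_iff hn).mpr (Or.inl rfl)
      by_contra hc2
      exact h1 ((o.dir_iff i (i+1) hadj).mpr hc2)
    have key : ∀ j : Fin n, o.dir j (j - 1) := by
      intro j
      have := hall (j - 1)
      rwa [sub_one_add_one] at this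
    have claim : ∀ m : ℕ, Relation.TransGen o.dir 0 (-(((m+1) : ℕ) : Fin n)) := by
      intro m
      induction m with
      | zero =>
        have := key 0
        rw [zero_sub] at this
        exact Relation.TransGen.single (by simpa using this)
      | succ m ih =>
        have hk := key (-(((m+1) : ℕ) : Fin n))
        have he : (-(((m+1) : ℕ) : Fin n)) - 1 = -(((m+2) : ℕ) : Fin n) := by
          push_cast
          ring
        rw [he] at hk
        exact Relation.TransGen.tail ih hk
    have := claim (n - 1)
    have he : ((n - 1 + 1 : ℕ) : Fin n) = 0 := by
      rw [Nat.sub_add_cancel (by omega : 1 ≤ n)]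
      exact Fin.natCast_self n
    rw [he, neg_zero] at this
    exact h 0 this
  · by_contra hc
    push_neg at hc
    have hall : ∀ i : Fin n, o.dir i (i + 1) := by
      intro i
      exact (Fo_iff o i).mp (by simpa using hc i)
    have claim : ∀ m : ℕ, Relation.TransGen o.dir 0 (((m+1) : ℕ) : Fin n) := by
      intro m
      induction m with
      | zero => exact Relation.TransGen.single (by simpa using hall 0)
      | succ m ih =>
        have hk := hall (((m+1) : ℕ) : Fin n)
        have he : (((m+1) : ℕ) : Fin n) + 1 = (((m+2) : ℕ) : Fin n) := by
          push_cast
          ring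
        rw [he] at hk
        exact Relation.TransGen.tail ih hk
    have := claim (n - 1)
    have he : ((n - 1 + 1 : ℕ) : Fin n) = 0 := by
      rw [Nat.sub_add_cancel (by omega : 1 ≤ n)]
      exact Fin.natCast_self n
    rw [he] at this
    exact h 0 this

def cnt (f : Fin n → Bool) : ℕ := (Finset.univ.filter (fun i => f i = true)).card

def can (n : ℕ) (k : ℕ) : Fin n → Bool := fun i => decide (i.val < k)

def move (f : Fin n → Bool) (a b : Fin n) : Fin n → Bool :=
  fun x => if x = a then true else if x = b then false else f x

omit [NeZero n] in
lemma cnt_move (f : Fin n → Bool) (a b : Fin n) (hab : a ≠ b)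
    (ha : f a = false) (hb : f b = true) : cnt (move f a b) = cnt f := by
  classical
  have hfil : Finset.univ.filter (fun i => move f a b i = true) =
      insert a ((Finset.univ.filter (fun i => f i = true)).erase b) := by
    ext x
    simp only [Finset.mem_filter, Finset.mem_univ, true_and, Finset.mem_insert,
      Finset.mem_erase, move]
    by_cases hx : x = a
    · subst hx; simp [ha]
    · by_cases hx2 : x = b
      · subst hx2; simp [hx, hab.symm]
      · simp [hx, hx2]
  have hbmem : b ∈ Finset.univ.filter (fun i => f i = true) := by
    simp [hb]
  have hanotin : a ∉ (Finset.univ.filter (fun i => f i = true)).erase b := by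
    simp [ha]
  rw [cnt, hfil, Finset.card_insert_of_notMem hanotin,
    Finset.card_erase_of_mem hbmem, cnt]
  have : 1 ≤ (Finset.univ.filter (fun i => f i = true)).card :=
    Finset.card_pos.mpr ⟨b, hbmem⟩
  omega

omit [NeZero n] in
lemma cnt_pos {f : Fin n → Bool} {s : Fin n} (hs : f s = true) : 1 ≤ cnt f :=
  Finset.card_pos.mpr ⟨s, by simp [hs]⟩

omit [NeZero n] in
lemma cnt_le {f : Fin n → Bool} {t : Fin n} (ht : f t = false) : cnt f ≤ n - 1 := by
  have h1 : cnt f ≤ n := by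
    calc cnt f ≤ Finset.univ.card := Finset.card_le_card (Finset.filter_subset _ _)
      _ = n := by simp
  have h2 : cnt f ≠ n := by
    intro h
    have : Finset.univ.filter (fun i => f i = true) = Finset.univ :=
      Finset.eq_univ_of_card _ (by simpa [cnt] using h)
    have := Finset.mem_filter.mp (this ▸ Finset.mem_univ t)
    rw [ht] at this
    exact Bool.noConfusion this.2
  have hn0 : 0 < n := t.pos
  omega

lemma cnt_can (k : ℕ) (hk : k ≤ n) : cnt (can n k) = k := by
  have hfil : Finset.univ.filter (fun i => can n k i = true) =
      Finset.univ.filter (fun i : Fin n => i.val < k) := by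
    ext x; simp [can]
  rw [cnt, hfil]
  rcases eq_or_lt_of_le hk with h | h
  · have hfu : Finset.univ.filter (fun i : Fin n => i.val < k) = Finset.univ := by
      ext x
      have := x.isLt
      simp only [Finset.mem_filter, Finset.mem_univ, true_and, iff_true]
      omega
    rw [hfu, Finset.card_univ, Fintype.card_fin]
    omega
  · have : Finset.univ.filter (fun i : Fin n => i.val < k) = Finset.Iio (⟨k, h⟩ : Fin n) := by
      ext x
      simp [Finset.mem_Iio, Fin.lt_def]
    rw [this, Fin.card_Iio]

def msr (f : Fin n → Bool) : ℕ := ∑ i : Fin n, (if f i = true then i.val else 0)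

omit [NeZero n] in
lemma msr_move (f : Fin n → Bool) (a b : Fin n) (hab : a ≠ b)
    (ha : f a = false) (hb : f b = true) :
    msr (move f a b) + b.val = msr f + a.val := by
  classical
  set T : (Fin n → Bool) → Fin n → ℕ := fun g i => if g i = true then i.val else 0 with hT
  have key : ∀ g : Fin n → Bool, msr g =
      T g a + (T g b + ∑ i ∈ (Finset.univ.erase a).erase b, T g i) := by
    intro g
    rw [msr]
    rw [← Finset.add_sum_erase _ (T g) (Finset.mem_univ a)]
    rw [← Finset.add_sum_erase _ (T g) (Finset.mem_erase.mpr ⟨hab.symm, Finset.mem_univ b⟩)]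
  have hrest : ∑ i ∈ (Finset.univ.erase a).erase b, T (move f a b) i =
      ∑ i ∈ (Finset.univ.erase a).erase b, T f i := by
    apply Finset.sum_congr rfl
    intro x hx
    have hxb : x ≠ b := (Finset.mem_erase.mp hx).1
    have hxa : x ≠ a := (Finset.mem_erase.mp (Finset.mem_erase.mp hx).2).1
    simp [hT, move, hxa, hxb]
  have h1 : T (move f a b) a = a.val := by simp [hT, move]
  have h2 : T (move f a b) b = 0 := by simp [hT, move, hab.symm]
  have h3 : T f a = 0 := by simp [hT, ha]
  have h4 : T f b = b.val := by simp [hT, hb]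
  rw [key (move f a b), key f, hrest, h1, h2, h3, h4]
  omega

lemma add_eq_iff_eq_sub' (hn : 3 ≤ n) {j v : Fin n} : j + 1 = v → j = v - 1 := by
  intro h
  rw [← h, add_one_sub_one]

lemma click_step (hn : 3 ≤ n) (f : Fin n → Bool) (v : Fin n)
    (h1 : f (v - 1) = false) (h2 : f v = true) :
    ClickRel (mkO hn f) (mkO hn (move f (v - 1) v)) := by
  have hAv : v - 1 ≠ v := sub_one_ne hn v
  have hvv : v ≠ v - 1 := hAv.symm
  refine ⟨v, ?_, ?_⟩
  · rintro j (⟨hj, hjf⟩ | ⟨hj, hjf⟩)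
    · rw [add_eq_iff_eq_sub' hn hj, h1] at hjf
      exact Bool.noConfusion hjf
    · rw [h2] at hjf
      exact Bool.noConfusion hjf
  · intro i j
    show fdir (move f (v - 1) v) i j ↔ _
    by_cases hi : i = v
    · subst hi
      rw [if_pos (Or.inl rfl)]
      constructor
      · rintro (⟨h3, h4⟩ | ⟨h3, h4⟩)
        · exfalso
          simp [move, hvv] at h4
        · exfalso
          rw [add_eq_iff_eq_sub' hn h3] at h4
          simp [move] at h4
      · rintro (⟨h3, h4⟩ | ⟨h3, h4⟩)
        · exfalso
          rw [add_eq_iff_eq_sub' hn h3, h1] at h4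
          exact Bool.noConfusion h4
        · exfalso
          rw [h2] at h4
          exact Bool.noConfusion h4
    · by_cases hj : j = v
      · subst hj
        rw [if_pos (Or.inr rfl)]
        constructor
        · rintro (⟨h3, h4⟩ | ⟨h3, h4⟩)
          · exact Or.inr ⟨h3, by rw [add_eq_iff_eq_sub' hn h3, h1]⟩
          · exact Or.inl ⟨h3, h2⟩
        · rintro (⟨h3, h4⟩ | ⟨h3, h4⟩)
          · refine Or.inr ⟨h3, ?_⟩
            simp [move, hvv]
          · refine Or.inl ⟨h3, ?_⟩
            rw [add_eq_iff_eq_sub' hn h3]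
            simp [move]
      · rw [if_neg (by tauto)]
        have e1 : i + 1 = j → move f (v - 1) v i = f i := by
          intro h
          have hia : i ≠ v - 1 := by
            intro hh
            rw [hh, sub_one_add_one] at h
            exact hj h.symm
          simp [move, hia, hi]
        have e2 : j + 1 = i → move f (v - 1) v j = f j := by
          intro h
          have hja : j ≠ v - 1 := by
            intro hh
            rw [hh, sub_one_add_one] at h
            exact hi h.symm
          simp [move, hja, hj]
        constructor
        · rintro (⟨h3, h4⟩ | ⟨h3, h4⟩)
          · exact Or.inl ⟨h3, by rw [← e1 h3]; exact h4⟩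
          · exact Or.inr ⟨h3, by rw [← e2 h3]; exact h4⟩
        · rintro (⟨h3, h4⟩ | ⟨h3, h4⟩)
          · exact Or.inl ⟨h3, by rw [e1 h3]; exact h4⟩
          · exact Or.inr ⟨h3, by rw [e2 h3]; exact h4⟩

lemma Fo_congr {Y : SimpleGraph (Fin n)} {o o' : Orient Y} (x : Fin n)
    (h : o'.dir x (x + 1) ↔ o.dir x (x + 1)) : Fo o' x = Fo o x := by
  simp only [Fo]
  exact decide_eq_decide.mpr h

lemma click_Fo (hn : 3 ≤ n) {o o' : Orient (circGraph n)} (h : ClickRel o o') :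
    ∃ v, Fo o (v - 1) = false ∧ Fo o v = true ∧ Fo o' = move (Fo o) (v - 1) v := by
  obtain ⟨v, hsrc, hiff⟩ := h
  have hadjv : (circGraph n).Adj v (v + 1) := (adj_iff hn).mpr (Or.inl rfl)
  have hadjv1 : (circGraph n).Adj (v - 1) v := by
    have := (adj_iff hn (i := v - 1) (j := v)).mpr (Or.inl (sub_one_add_one v))
    exact this
  have hfv : Fo o v = true := by
    rw [Fo_iff]
    exact (o.dir_iff v (v + 1) hadjv).mpr (hsrc (v + 1))
  have hfv1 : Fo o (v - 1) = false := by
    rw [Fo_false_iff, sub_one_add_one]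
    exact hsrc (v - 1)
  refine ⟨v, hfv1, hfv, ?_⟩
  have hvv : v ≠ v - 1 := (sub_one_ne hn v).symm
  funext x
  by_cases hx : x = v
  · have hnd : ¬ o'.dir x (x + 1) := by
      rw [hiff x (x + 1), if_pos (Or.inl hx), hx]
      exact hsrc (v + 1)
    rw [(Fo_false_iff o' x).mpr hnd]
    simp [move, hx, hvv]
  · by_cases hx2 : x = v - 1
    · have hdir : o.dir v (v - 1) := by
        by_contra hc
        exact (hsrc (v - 1)) ((o.dir_iff (v - 1) v hadjv1).mpr hc)
      have hd2 : o'.dir x (x + 1) := by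
        rw [hx2, sub_one_add_one, hiff (v - 1) v, if_pos (Or.inr rfl)]
        exact hdir
      rw [(Fo_iff o' x).mpr hd2]
      simp [move, hx2]
    · have hcond : ¬ (x = v ∨ x + 1 = v) := by
        rintro (hc | hc)
        · exact hx hc
        · exact hx2 (add_eq_iff_eq_sub' hn hc)
      have : Fo o' x = Fo o x := by
        apply Fo_congr
        rw [hiff x (x + 1), if_neg hcond]
      rw [this]
      simp [move, hx, hx2]

lemma click_cnt (hn : 3 ≤ n) {o o' : Orient (circGraph n)} (h : ClickRel o o') :
    cnt (Fo o') = cnt (Fo o) := by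
  obtain ⟨v, h1, h2, h3⟩ := click_Fo hn h
  rw [h3, cnt_move _ _ _ (sub_one_ne hn v) h1 h2]

lemma one_val (hn : 3 ≤ n) : (1 : Fin n).val = 1 := by
  rw [Fin.val_one', Nat.mod_eq_of_lt (by omega : 1 < n)]

lemma mk_nat_add_one (hn : 3 ≤ n) (b : ℕ) (hb : b + 1 < n) :
    (⟨b, by omega⟩ : Fin n) + 1 = ⟨b + 1, hb⟩ := by
  apply Fin.ext
  rw [Fin.add_def]
  show (b + (1 : Fin n).val) % n = b + 1
  rw [one_val hn, Nat.mod_eq_of_lt hb]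

lemma sorted_eq_can (hn : 3 ≤ n) (f : Fin n → Bool)
    (h : ∀ i : Fin n, i.val + 1 < n → f i = false → f (i + 1) = false) :
    f = can n (cnt f) := by
  have mono : ∀ b : ℕ, ∀ hb : b < n, f ⟨b, hb⟩ = true →
      ∀ a : ℕ, ∀ hab : a ≤ b, f ⟨a, by omega⟩ = true := by
    intro b
    induction b with
    | zero =>
      intro hb hf a hab
      have ha0 : a = 0 := by omega
      subst ha0
      exact hf
    | succ b ih =>
      intro hb hf a hab
      have hb' : b < n := by omega
      have hfb : f ⟨b, hb'⟩ = true := by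
        rcases Bool.eq_false_or_eq_true (f ⟨b, hb'⟩) with hc | hc
        · exact hc
        · have := h ⟨b, hb'⟩ (by simpa using hb) hc
          rw [mk_nat_add_one hn b hb] at this
          rw [hf] at this
          exact Bool.noConfusion this
      rcases Nat.lt_or_ge a (b + 1) with hlt | hge
      · exact ih hb' hfb a (by omega)
      · have ha : a = b + 1 := by omega
        subst ha
        exact hf
  have iff1 : ∀ x : Fin n, f x = true ↔ x.val < cnt f := by
    intro x
    constructor
    · intro hfx
      have hsub : Finset.Iic x ⊆ Finset.univ.filter (fun i => f i = true) := by
        intro y hy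
        have hyx : y.val ≤ x.val := Fin.le_def.mp (Finset.mem_Iic.mp hy)
        have := mono x.val x.isLt (by simpa using hfx) y.val hyx
        simp only [Finset.mem_filter, Finset.mem_univ, true_and]
        simpa using this
      have := Finset.card_le_card hsub
      rw [Fin.card_Iic] at this
      exact Nat.lt_of_lt_of_le (Nat.lt_succ_self _) this
    · intro hlt
      rcases Bool.eq_false_or_eq_true (f x) with hc | hc
      · exact hc
      · exfalso
        have hsub : Finset.univ.filter (fun i => f i = true) ⊆ Finset.Iio x := by
          intro y hy
          have hfy : f y = true := (Finset.mem_filter.mp hy).2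
          rw [Finset.mem_Iio]
          by_contra hcon
          have hxy : x.val ≤ y.val := by
            rw [Fin.lt_def] at hcon
            omega
          have := mono y.val y.isLt (by simpa using hfy) x.val hxy
          have h9 : f x = true := by simpa using this
          rw [hc] at h9
          exact Bool.noConfusion h9
        have h11 := Finset.card_le_card hsub
        rw [Fin.card_Iio] at h11
        have h10 : cnt f ≤ x.val := by rw [cnt]; simpa using h11
        omega
  funext x
  rcases Bool.eq_false_or_eq_true (f x) with hc | hc
  · rw [hc]
    symm
    rw [can, decide_eq_true_eq]
    exact (iff1 x).mp hc
  · rw [hc]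
    symm
    rw [can, decide_eq_false_iff_not]
    intro hcon
    have := (iff1 x).mpr hcon
    rw [hc] at this
    exact Bool.noConfusion this

lemma sorted_case (hn : 3 ≤ n) (f : Fin n → Bool)
    (ha : IsAcyc (mkO hn f)) (hb : IsAcyc (mkO hn (can n (cnt f))))
    (h : ∀ i : Fin n, i.val + 1 < n → f i = false → f (i + 1) = false) :
    Relation.EqvGen (fun a b : {o : Orient (circGraph n) // IsAcyc o} => ClickRel a.1 b.1)
      ⟨mkO hn f, ha⟩ ⟨mkO hn (can n (cnt f)), hb⟩ := by
  have hsort := sorted_eq_can hn f h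
  have heq : (⟨mkO hn f, ha⟩ : {o : Orient (circGraph n) // IsAcyc o}) =
      ⟨mkO hn (can n (cnt f)), hb⟩ := Subtype.ext (by exact congrArg (mkO hn) hsort)
  rw [heq]
  exact Relation.EqvGen.refl _

lemma sort_step (hn : 3 ≤ n) (f : Fin n → Bool) {i : Fin n} (hi : i.val + 1 < n)
    (hfi : f i = false) (hfi1 : f (i + 1) = true) :
    ClickRel (mkO hn f) (mkO hn (move f i (i + 1))) := by
  have e : (i + 1 : Fin n) - 1 = i := add_one_sub_one i
  have step := click_step hn f (i + 1) (by rw [e]; exact hfi) hfi1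
  rwa [e] at step

lemma val_add_one_of_lt (hn : 3 ≤ n) {i : Fin n} (hi : i.val + 1 < n) :
    (i + 1).val = i.val + 1 := by
  apply val_add_one_of_ne hn
  intro h
  rw [h, neg_one_val hn] at hi
  omega

lemma sort (hn : 3 ≤ n) (N : ℕ) : ∀ (f : Fin n → Bool), msr f ≤ N →
    ∀ (ha : IsAcyc (mkO hn f)) (hb : IsAcyc (mkO hn (can n (cnt f)))),
    Relation.EqvGen (fun a b : {o : Orient (circGraph n) // IsAcyc o} => ClickRel a.1 b.1)
      ⟨mkO hn f, ha⟩ ⟨mkO hn (can n (cnt f)), hb⟩ := by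
  induction N with
  | zero =>
    intro f hm ha hb
    apply sorted_case hn f ha hb
    intro i hilt hfi
    rcases Bool.eq_false_or_eq_true (f (i + 1)) with hc | hc
    · exfalso
      have hval : (i + 1 : Fin n).val = i.val + 1 := val_add_one_of_lt hn hilt
      have hge : (i + 1 : Fin n).val ≤ msr f := by
        have := Finset.single_le_sum (f := fun x : Fin n => if f x = true then x.val else 0)
          (fun x _ => Nat.zero_le _) (Finset.mem_univ (i + 1))
        simpa [msr, hc] using this
      omega
    · exact hc
  | succ N ih =>
    intro f hm ha hb
    by_cases hex : ∃ i : Fin n, i.val + 1 < n ∧ f i = false ∧ f (i + 1) = true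
    · obtain ⟨i, hilt, hfi, hfi1⟩ := hex
      have hne : i ≠ i + 1 := (add_one_ne hn i).symm
      have step := sort_step hn f hilt hfi hfi1
      have cntmove : cnt (move f i (i + 1)) = cnt f := cnt_move f i (i + 1) hne hfi hfi1
      have hval : (i + 1 : Fin n).val = i.val + 1 := val_add_one_of_lt hn hilt
      have msrmove := msr_move f i (i + 1) hne hfi hfi1
      have hm' : msr (move f i (i + 1)) ≤ N := by omega
      have hs' : move f i (i + 1) i = true := by simp [move]
      have ht' : move f i (i + 1) (i + 1) = false := by simp [move, hne.symm]
      have ha' : IsAcyc (mkO hn (move f i (i + 1))) := acyc_of_nonconst hn _ hs' ht'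
      have hb' : IsAcyc (mkO hn (can n (cnt (move f i (i + 1))))) := by
        rw [cntmove]; exact hb
      have ihres := ih (move f i (i + 1)) hm' ha' hb'
      have hendeq : (⟨mkO hn (can n (cnt (move f i (i + 1)))), hb'⟩ :
          {o : Orient (circGraph n) // IsAcyc o}) = ⟨mkO hn (can n (cnt f)), hb⟩ :=
        Subtype.ext (by exact congrArg (fun k => mkO hn (can n k)) cntmove)
      rw [hendeq] at ihres
      exact Relation.EqvGen.trans _ _ _ (Relation.EqvGen.rel _ _ step) ihres
    · push_neg at hex
      apply sorted_case hn f ha hb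
      intro i hilt hfi
      rcases Bool.eq_false_or_eq_true (f (i + 1)) with hc | hc
      · exact absurd hc (hex i hilt hfi)
      · exact hc

end CycProof

open CycProof in
/-- For the `n`-cycle (`n ≥ 3`), the number of κ-equivalence classes of acyclic
orientations under source-to-sink operations is `n - 1`. -/
theorem stmt10 {n : ℕ} (hn : 3 ≤ n) :
    Nat.card (Quotient (Relation.EqvGen.setoid
      (fun a b : {o : Orient (circGraph n) // IsAcyc o} =>
        ClickRel a.1 b.1))) = n - 1 := by
  haveI : NeZero n := ⟨by omega⟩
  classical
  set R : {o : Orient (circGraph n) // IsAcyc o} → {o : Orient (circGraph n) // IsAcyc o} → Prop :=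
    fun a b => ClickRel a.1 b.1 with hR
  have inv : ∀ a b, Relation.EqvGen R a b → cnt (Fo a.1) = cnt (Fo b.1) := by
    intro a b h
    induction h with
    | rel x y hxy => exact (click_cnt hn hxy).symm
    | refl x => rfl
    | symm x y _ ih => exact ih.symm
    | trans x y z _ _ ih1 ih2 => exact ih1.trans ih2
  have bounds : ∀ a : {o : Orient (circGraph n) // IsAcyc o},
      1 ≤ cnt (Fo a.1) ∧ cnt (Fo a.1) ≤ n - 1 := by
    intro a
    obtain ⟨⟨s, hs⟩, ⟨t, ht⟩⟩ := nonconst_of_acyc hn a.1 a.2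
    exact ⟨cnt_pos hs, cnt_le ht⟩
  have hcan : ∀ k : ℕ, 1 ≤ k → k ≤ n - 1 → IsAcyc (mkO hn (can n k)) := by
    intro k h1 h2
    apply acyc_of_nonconst hn (can n k) (s := 0) (t := ⟨n - 1, by omega⟩)
    · rw [can, decide_eq_true_eq]
      show (0 : Fin n).val < k
      rw [Fin.val_zero]
      omega
    · rw [can, decide_eq_false_iff_not]
      show ¬ ((⟨n - 1, by omega⟩ : Fin n).val < k)
      simp only
      omega
  have key : ∀ a : {o : Orient (circGraph n) // IsAcyc o},
      ∀ hb : IsAcyc (mkO hn (can n (cnt (Fo a.1)))),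
      Relation.EqvGen R a ⟨mkO hn (can n (cnt (Fo a.1))), hb⟩ := by
    intro a hb
    have ha' : IsAcyc (mkO hn (Fo a.1)) := by
      rw [mk_Fo hn a.1]; exact a.2
    have haeq : a = ⟨mkO hn (Fo a.1), ha'⟩ := Subtype.ext (mk_Fo hn a.1).symm
    have hres := sort hn (msr (Fo a.1)) (Fo a.1) le_rfl ha' hb
    rw [← haeq] at hres
    exact hres
  have e : Quotient (Relation.EqvGen.setoid R) ≃ Fin (n - 1) :=
    { toFun := Quotient.lift
        (fun a => (⟨cnt (Fo a.1) - 1, by have := bounds a; omega⟩ : Fin (n - 1)))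
        (by
          intro a b hab
          have := inv a b hab
          apply Fin.ext
          simp only
          rw [this])
      invFun := fun k => Quotient.mk _
        ⟨mkO hn (can n (k.val + 1)),
          hcan (k.val + 1) (by omega) (by have := k.isLt; omega)⟩
      left_inv := by
        intro q
        refine Quotient.inductionOn q ?_
        intro a
        have hb1 := bounds a
        have hb : IsAcyc (mkO hn (can n (cnt (Fo a.1)))) :=
          hcan (cnt (Fo a.1)) hb1.1 hb1.2
        apply Quotient.sound
        have he : (cnt (Fo a.1) - 1) + 1 = cnt (Fo a.1) := by omega
        have h2 : (⟨mkO hn (can n ((cnt (Fo a.1) - 1) + 1)),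
            hcan _ (by omega) (by omega)⟩ : {o : Orient (circGraph n) // IsAcyc o}) =
            ⟨mkO hn (can n (cnt (Fo a.1))), hb⟩ :=
          Subtype.ext (by exact congrArg (fun k => mkO hn (can n k)) he)
        show Relation.EqvGen R
          (⟨mkO hn (can n ((cnt (Fo a.1) - 1) + 1)),
            hcan _ (by omega) (by omega)⟩ : {o : Orient (circGraph n) // IsAcyc o}) a
        rw [h2]
        exact Relation.EqvGen.symm _ _ (key a hb)
      right_inv := by
        intro k
        apply Fin.ext
        show cnt (Fo (mkO hn (can n (k.val + 1)))) - 1 = k.val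
        rw [Fo_mk hn, cnt_can (k.val + 1) (by have := k.isLt; omega)]
        omega }
  rw [Nat.card_congr e, Nat.card_eq_fintype_card, Fintype.card_fin]
end
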